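/- arXiv:2312.00368 — 7 statements merged into one kernel-verified Lean document; each statement's English description precedes it below -/
import Mathlib

section
/- Let H be a connected linear k-uniform hypergraph with k ≥ 3, and v ∈ V(H). Then the number of Berge walks of length 2 starting at v equals (k-1)·Σ_{i=1}^{k} i·e_i(N_v), where e_i(N_v) is the number of edges of H intersecting the neighborhood N_v of v in exactly i vertices. -/
attribute [local instance] Classical.propDecidable

/-- The degree of a vertex. -/
def hDeg {V : Type*} [DecidableEq V] (E : Finset (Finset V)) (v : V) : ℕ :=
  (E.filter (fun e => v ∈ e)).card

/-- The neighbourhood of `v`: vertices `w ≠ v` such that `{v,w}` lies in an edge. -/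
def hNbhd {V : Type*} [Fintype V] [DecidableEq V] (E : Finset (Finset V)) (v : V) :
    Finset V :=
  Finset.univ.filter (fun w => w ≠ v ∧ ∃ e ∈ E, v ∈ e ∧ w ∈ e)

/-- `e_i(S)`: the number of edges meeting `S` in exactly `i` vertices. -/
def eCount {V : Type*} [DecidableEq V] (E : Finset (Finset V)) (S : Finset V) (i : ℕ) : ℕ :=
  (E.filter (fun e => (e ∩ S).card = i)).card

/-- In a connected linear `k`-uniform hypergraph (`k ≥ 3`), the number of Berge
walks of length 2 starting at `v` equals `(k-1)·Σ_{i=1}^{k} i·e_i(N_v)`. -/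
theorem berge_walks_length_two {V : Type*} [Fintype V] [DecidableEq V]
    (E : Finset (Finset V)) (k : ℕ) (hk : 3 ≤ k)
    (hunif : ∀ e ∈ E, e.card = k)
    (hlin : ∀ e ∈ E, ∀ f ∈ E, e ≠ f → (e ∩ f).card ≤ 1)
    (hconn : ∀ u v : V, Relation.ReflTransGen (fun a b => ∃ e ∈ E, a ∈ e ∧ b ∈ e) u v)
    (v : V) :
    ((E ×ˢ (Finset.univ : Finset V) ×ˢ E ×ˢ (Finset.univ : Finset V)).filter
        (fun p => v ∈ p.1 ∧ p.2.1 ∈ p.1 ∧ p.2.1 ≠ v ∧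
          p.2.1 ∈ p.2.2.1 ∧ p.2.2.2 ∈ p.2.2.1 ∧ p.2.2.2 ≠ p.2.1)).card
      = (k - 1) * ∑ i ∈ Finset.Icc 1 k, i * eCount E (hNbhd E v) i := by
  classical
  set N := hNbhd E v with hN
  -- erase counts
  have herase : ∀ e ∈ E, ∀ w ∈ e, (e.erase w).card = k - 1 := by
    intro e he w hw
    rw [Finset.card_erase_of_mem hw, hunif e he]
  -- inner double sum
  have hinner : ∀ w : V,
      (∑ e2 ∈ E, ∑ v3 : V, if w ∈ e2 ∧ v3 ∈ e2 ∧ v3 ≠ w then 1 else 0)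
        = (k - 1) * hDeg E w := by
    intro w
    have h1 : ∀ e2 ∈ E,
        (∑ v3 : V, if w ∈ e2 ∧ v3 ∈ e2 ∧ v3 ≠ w then 1 else 0)
          = if w ∈ e2 then (k - 1) else 0 := by
      intro e2 he2
      by_cases hw : w ∈ e2
      · simp only [hw, true_and, if_true]
        have : (∑ v3 : V, if v3 ∈ e2 ∧ v3 ≠ w then 1 else 0)
            = (Finset.univ.filter (fun v3 => v3 ∈ e2 ∧ v3 ≠ w)).card := by
          rw [Finset.card_filter]
        rw [this]
        have : (Finset.univ.filter (fun v3 => v3 ∈ e2 ∧ v3 ≠ w)) = e2.erase w := by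
          ext x; simp [Finset.mem_erase, and_comm]
        rw [this, herase e2 he2 w hw]
      · simp [hw]
    rw [Finset.sum_congr rfl h1, ← Finset.sum_filter, Finset.sum_const, hDeg,
      smul_eq_mul, mul_comm]
  -- Step 1: expand the card as nested sums
  have hL : ((E ×ˢ (Finset.univ : Finset V) ×ˢ E ×ˢ (Finset.univ : Finset V)).filter
        (fun p => v ∈ p.1 ∧ p.2.1 ∈ p.1 ∧ p.2.1 ≠ v ∧
          p.2.1 ∈ p.2.2.1 ∧ p.2.2.2 ∈ p.2.2.1 ∧ p.2.2.2 ≠ p.2.1)).card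
      = ∑ e1 ∈ E, ∑ v2 : V, ∑ e2 ∈ E, ∑ v3 : V,
          if v ∈ e1 ∧ v2 ∈ e1 ∧ v2 ≠ v ∧ v2 ∈ e2 ∧ v3 ∈ e2 ∧ v3 ≠ v2 then 1 else 0 := by
    rw [Finset.card_filter]
    simp only [Finset.sum_product]
  rw [hL]
  -- Step 2: collapse the two inner sums
  have h2 : ∀ e1 ∈ E, ∀ v2 : V,
      (∑ e2 ∈ E, ∑ v3 : V,
          if v ∈ e1 ∧ v2 ∈ e1 ∧ v2 ≠ v ∧ v2 ∈ e2 ∧ v3 ∈ e2 ∧ v3 ≠ v2 then 1 else 0)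
        = if v ∈ e1 ∧ v2 ∈ e1 ∧ v2 ≠ v then (k - 1) * hDeg E v2 else 0 := by
    intro e1 he1 v2
    by_cases hA : v ∈ e1 ∧ v2 ∈ e1 ∧ v2 ≠ v
    · rw [if_pos hA, ← hinner v2]
      apply Finset.sum_congr rfl; intro e2 he2
      apply Finset.sum_congr rfl; intro v3 _
      congr 1
      simp only [eq_iff_iff]
      tauto
    · rw [if_neg hA]
      apply Finset.sum_eq_zero; intro e2 _
      apply Finset.sum_eq_zero; intro v3 _
      rw [if_neg]; tauto
  rw [Finset.sum_congr rfl (fun e1 he1 => Finset.sum_congr rfl (fun v2 _ => h2 e1 he1 v2))]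
  -- Step 3: rewrite as sum over edges containing v and their punctured vertex sets
  have h3 : ∀ e1 ∈ E,
      (∑ v2 : V, if v ∈ e1 ∧ v2 ∈ e1 ∧ v2 ≠ v then (k - 1) * hDeg E v2 else 0)
        = if v ∈ e1 then ∑ v2 ∈ e1.erase v, (k - 1) * hDeg E v2 else 0 := by
    intro e1 he1
    by_cases hv : v ∈ e1
    · simp only [hv, true_and, if_true]
      rw [← Finset.sum_filter]
      apply Finset.sum_congr _ (fun _ _ => rfl)
      ext x; simp [Finset.mem_erase, and_comm]
    · simp [hv]
  rw [Finset.sum_congr rfl h3, ← Finset.sum_filter]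
  -- Step 4: the punctured edges partition the neighbourhood
  have hdisj : (↑(E.filter (fun e => v ∈ e)) : Set (Finset V)).PairwiseDisjoint
      (fun e => e.erase v) := by
    intro e he f hf hef
    simp only [Finset.coe_filter, Set.mem_setOf_eq] at he hf
    simp only [Function.onFun]
    rw [Finset.disjoint_left]
    intro w hwe hwf
    have hw1 : w ∈ e := Finset.mem_of_mem_erase hwe
    have hw2 : w ∈ f := Finset.mem_of_mem_erase hwf
    have hwv : w ≠ v := Finset.ne_of_mem_erase hwe
    have : ({v, w} : Finset V) ⊆ e ∩ f := by
      intro x hx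
      simp only [Finset.mem_insert, Finset.mem_singleton] at hx
      rcases hx with rfl | rfl <;> simp [Finset.mem_inter, he.2, hf.2, hw1, hw2]
    have h2le : 2 ≤ (e ∩ f).card := by
      calc 2 = ({v, w} : Finset V).card := by rw [Finset.card_insert_of_notMem (by simp [Ne.symm hwv]), Finset.card_singleton]
      _ ≤ (e ∩ f).card := Finset.card_le_card this
    have := hlin e he.1 f hf.1 hef
    omega
  have hunion : (E.filter (fun e => v ∈ e)).biUnion (fun e => e.erase v) = N := by
    ext w
    simp only [Finset.mem_biUnion, Finset.mem_filter, Finset.mem_erase, hN, hNbhd,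
      Finset.mem_univ, true_and]
    constructor
    · rintro ⟨e, ⟨he, hve⟩, hwv, hwe⟩
      exact ⟨hwv, e, he, hve, hwe⟩
    · rintro ⟨hwv, e, he, hve, hwe⟩
      exact ⟨e, ⟨he, hve⟩, hwv, hwe⟩
  rw [← Finset.sum_biUnion hdisj, hunion]
  -- Step 5: the right-hand sum counts degrees over the neighbourhood
  have hRHS : ∑ i ∈ Finset.Icc 1 k, i * eCount E N i = ∑ w ∈ N, hDeg E w := by
    have hswap : ∑ w ∈ N, hDeg E w = ∑ e ∈ E, (e ∩ N).card := by
      simp only [hDeg, Finset.card_filter]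
      rw [Finset.sum_comm]
      apply Finset.sum_congr rfl; intro e _
      rw [← Finset.sum_filter, Finset.filter_mem_eq_inter]
      simp [Finset.inter_comm]
    have hmaps : ∀ e ∈ E, (e ∩ N).card ∈ Finset.range (k + 1) := by
      intro e he
      rw [Finset.mem_range, Nat.lt_succ_iff, ← hunif e he]
      exact Finset.card_le_card (Finset.inter_subset_left)
    have hfib : ∑ e ∈ E, (e ∩ N).card = ∑ i ∈ Finset.range (k + 1), i * eCount E N i := by
      rw [← Finset.sum_fiberwise_of_maps_to hmaps]
      apply Finset.sum_congr rfl; intro i _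
      rw [eCount]
      rw [Finset.sum_congr rfl (fun e he => (Finset.mem_filter.mp he).2),
        Finset.sum_const, smul_eq_mul, mul_comm]
    have hrange : Finset.range (k + 1) = insert 0 (Finset.Icc 1 k) := by
      ext i; simp [Nat.lt_succ_iff]; omega
    rw [hswap, hfib, hrange, Finset.sum_insert (by simp), zero_mul, zero_add]
  rw [hRHS, Finset.mul_sum]
end

section
/- Let H be a connected linear 3-uniform hypergraph on n vertices containing no Berge cycle of length l, l ≥ 5, and let u be any vertex. Then 2·e_2(N_u) + 3·e_3(N_u) ≤ (6l - 13)·d_u, where e_i(N_u) is the number of edges of H meeting the neighborhood N_u of u in exactly i vertices. -/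
attribute [local instance] Classical.propDecidable

/-- `H` contains no Berge cycle of length `l`: there are no `l` distinct vertices
and `l` distinct edges with `{v_i, v_{i+1}} ⊆ e_i` cyclically. -/
def BergeCycleFree {V : Type*} (E : Finset (Finset V)) (l : ℕ) : Prop :=
  ¬ ∃ (v : Fin l → V) (e : Fin l → Finset V),
      Function.Injective v ∧ Function.Injective e ∧
      ∀ i : Fin l, e i ∈ E ∧ v i ∈ e i ∧ v ⟨(i.val + 1) % l, Nat.mod_lt _ i.pos⟩ ∈ e i

lemma triple_eq {V : Type*} [DecidableEq V] {t : Finset V} {a b c : V} (ht : t.card = 3)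
    (ha : a ∈ t) (hb : b ∈ t) (hc : c ∈ t) (hab : a ≠ b) (hac : a ≠ c) (hbc : b ≠ c) :
    t = {a, b, c} := by
  have hsub : ({a, b, c} : Finset V) ⊆ t := by
    intro x hx
    simp only [Finset.mem_insert, Finset.mem_singleton] at hx
    rcases hx with rfl | rfl | rfl <;> assumption
  have hcard : ({a, b, c} : Finset V).card = 3 := by
    rw [Finset.card_insert_of_notMem (by simp [hab, hac]),
      Finset.card_insert_of_notMem (by simp [hbc]), Finset.card_singleton]
  exact (Finset.eq_of_subset_of_card_le hsub (by omega)).symm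

lemma constructA {V : Type*} [DecidableEq V] (E : Finset (Finset V)) (l : ℕ) (hl : 5 ≤ l)
    (hfree : BergeCycleFree E l) (u : V) (w : ℕ → V) (h fw : ℕ → Finset V)
    (hwinj : ∀ i j, i < l-1 → j < l-1 → w i = w j → i = j)
    (hwu : ∀ i, i < l-1 → w i ≠ u)
    (hh : ∀ i, i+1 < l-1 → h i ∈ E ∧ u ∉ h i ∧ w i ∈ h i ∧ w (i+1) ∈ h i)
    (hhinj : ∀ i j, i+1 < l-1 → j+1 < l-1 → h i = h j → i = j)
    (hf : ∀ i, i < l-1 → fw i ∈ E ∧ u ∈ fw i ∧ w i ∈ fw i)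
    (hne : fw 0 ≠ fw (l-2)) : False := by
  apply hfree
  have hu0 : u ∈ fw 0 := (hf 0 (by omega)).2.1
  have hul : u ∈ fw (l-2) := (hf (l-2) (by omega)).2.1
  refine ⟨fun i => if i.val = 0 then u else w (i.val - 1),
    fun i => if i.val = 0 then fw 0 else if i.val = l - 1 then fw (l-2) else h (i.val - 1),
    ?_, ?_, ?_⟩
  · intro i j hij
    have hi := i.isLt; have hj := j.isLt
    apply Fin.ext
    simp only at hij
    split_ifs at hij with h1 h2 h2
    · omega
    · exact absurd hij.symm (hwu _ (by omega))
    · exact absurd hij (hwu _ (by omega))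
    · have := hwinj _ _ (by omega) (by omega) hij; omega
  · intro i j hij
    have hi := i.isLt; have hj := j.isLt
    apply Fin.ext
    simp only at hij
    split_ifs at hij with h1 h2 h2 h3 h4 h4 h5 h5
    all_goals try omega
    all_goals try (exact absurd hij hne)
    all_goals try (exact absurd hij.symm hne)
    all_goals try (exact absurd (hij ▸ hu0) (hh _ (by omega)).2.1)
    all_goals try (exact absurd (hij ▸ hul) (hh _ (by omega)).2.1)
    all_goals try (exact absurd (hij.symm ▸ hu0) (hh _ (by omega)).2.1)
    all_goals try (exact absurd (hij.symm ▸ hul) (hh _ (by omega)).2.1)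
    · have := hhinj _ _ (by omega) (by omega) hij; omega
  · intro i
    have hi := i.isLt
    simp only
    by_cases hlast : i.val = l - 1
    · have e1 : (i.val + 1) % l = 0 := by
        rw [hlast, (by omega : l - 1 + 1 = l)]; exact Nat.mod_self l
      rw [e1, hlast, if_neg (by omega : ¬(l-1 = 0)), if_pos rfl,
        if_pos rfl, if_neg (by omega : ¬(l-1 = 0))]
      refine ⟨(hf (l-2) (by omega)).1, ?_, hul⟩
      rw [(by omega : l - 1 - 1 = l - 2)]
      exact (hf (l-2) (by omega)).2.2
    · have e1 : (i.val + 1) % l = i.val + 1 := Nat.mod_eq_of_lt (by omega)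
      rw [e1]
      by_cases h0 : i.val = 0
      · rw [h0]
        rw [if_pos rfl, if_pos rfl, if_neg (by omega : ¬(0+1 = 0))]
        exact ⟨(hf 0 (by omega)).1, hu0, (hf 0 (by omega)).2.2⟩
      · rw [if_neg h0, if_neg hlast, if_neg h0, if_neg (by omega : ¬(i.val + 1 = 0)),
          (by omega : i.val + 1 - 1 = (i.val - 1) + 1)]
        obtain ⟨hhE, -, hw1, hw2⟩ := hh (i.val - 1) (by omega)
        exact ⟨hhE, hw1, hw2⟩

lemma constructD {V : Type*} [DecidableEq V] (E : Finset (Finset V)) (l : ℕ) (hl : 5 ≤ l)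
    (hfree : BergeCycleFree E l) (u : V) (w : ℕ → V) (h fw : ℕ → Finset V)
    (hwinj : ∀ i j, i < l-1 → j < l-1 → w i = w j → i = j)
    (hwu : ∀ i, i < l-1 → w i ≠ u)
    (hh : ∀ i, i+1 < l-1 → h i ∈ E ∧ u ∉ h i ∧ w i ∈ h i ∧ w (i+1) ∈ h i)
    (hhinj : ∀ i j, i+1 < l-1 → j+1 < l-1 → h i = h j → i = j)
    (hf : ∀ i, i < l-1 → fw i ∈ E ∧ u ∈ fw i ∧ w i ∈ fw i)
    (hc : Finset V) (hcE : hc ∈ E) (hcu : u ∉ hc) (hc0 : w 0 ∈ hc) (hcl : w (l-2) ∈ hc)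
    (hcne : ∀ i, i+1 < l-1 → hc ≠ h i)
    (heq : fw 1 ≠ fw 0) : False := by
  apply hfree
  have hu0 : u ∈ fw 0 := (hf 0 (by omega)).2.1
  have hu1 : u ∈ fw 1 := (hf 1 (by omega)).2.1
  refine ⟨fun i => if i.val = 0 then u else if i.val = l-1 then w 0 else w i.val,
    fun i => if i.val = 0 then fw 1 else if i.val = l-2 then hc
      else if i.val = l-1 then fw 0 else h i.val,
    ?_, ?_, ?_⟩
  · intro i j hij
    have hi := i.isLt; have hj := j.isLt
    apply Fin.ext
    simp only at hij
    split_ifs at hij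
    all_goals try omega
    all_goals try (exact absurd hij.symm (hwu 0 (by omega)))
    all_goals try (exact absurd hij (hwu 0 (by omega)))
    all_goals try (exact absurd hij.symm (hwu j.val (by omega)))
    all_goals try (exact absurd hij (hwu i.val (by omega)))
    all_goals (have := hwinj _ _ (by omega) (by omega) hij; omega)
  · intro i j hij
    have hi := i.isLt; have hj := j.isLt
    apply Fin.ext
    simp only at hij
    split_ifs at hij
    all_goals try omega
    all_goals try (exact absurd hij heq)
    all_goals try (exact absurd hij.symm heq)
    all_goals try (exfalso; apply hcu; rw [← hij]; first | exact hu0 | exact hu1)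
    all_goals try (exfalso; apply hcu; rw [hij]; first | exact hu0 | exact hu1)
    all_goals try (exfalso; apply (hh j.val (by omega)).2.1; rw [← hij]; first | exact hu0 | exact hu1)
    all_goals try (exfalso; apply (hh i.val (by omega)).2.1; rw [hij]; first | exact hu0 | exact hu1)
    all_goals try (exact absurd hij (hcne j.val (by omega)))
    all_goals try (exact absurd hij.symm (hcne i.val (by omega)))
    all_goals (have := hhinj _ _ (by omega) (by omega) hij; omega)
  · intro i
    have hi := i.isLt
    simp only
    by_cases hlast : i.val = l - 1
    · have e1 : (i.val + 1) % l = 0 := by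
        rw [hlast, (by omega : l - 1 + 1 = l)]; exact Nat.mod_self l
      rw [e1, hlast, if_neg (by omega : ¬(l-1 = 0)), if_neg (by omega : ¬(l-1 = l-2)),
        if_pos rfl, if_pos rfl, if_neg (by omega : ¬(l-1 = 0)), if_pos rfl]
      exact ⟨(hf 0 (by omega)).1, (hf 0 (by omega)).2.2, hu0⟩
    · have e1 : (i.val + 1) % l = i.val + 1 := Nat.mod_eq_of_lt (by omega)
      rw [e1]
      by_cases h0 : i.val = 0
      · rw [h0, if_pos rfl, if_pos rfl, if_neg (by omega : ¬(0+1 = 0)),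
          if_neg (by omega : ¬(0+1 = l-1))]
        exact ⟨(hf 1 (by omega)).1, hu1, (hf 1 (by omega)).2.2⟩
      · by_cases h2 : i.val = l - 2
        · rw [h2, if_neg (by omega : ¬(l-2 = 0)), if_pos rfl,
            if_neg (by omega : ¬(l-2 = 0)), if_neg (by omega : ¬(l-2 = l-1)),
            (by omega : l-2+1 = l-1), if_neg (by omega : ¬(l-1 = 0)), if_pos rfl]
          exact ⟨hcE, hcl, hc0⟩
        · rw [if_neg h0, if_neg h2, if_neg hlast, if_neg h0, if_neg hlast,
            if_neg (by omega : ¬(i.val+1 = 0)), if_neg (by omega : ¬(i.val+1 = l-1))]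
          obtain ⟨hhE, -, hw1, hw2⟩ := hh i.val (by omega)
          exact ⟨hhE, hw1, hw2⟩

lemma constructC {V : Type*} [DecidableEq V] (E : Finset (Finset V)) (l : ℕ) (hl : 5 ≤ l)
    (hfree : BergeCycleFree E l) (u : V) (w : ℕ → V) (h fw : ℕ → Finset V)
    (hwinj : ∀ i j, i < l → j < l → w i = w j → i = j)
    (hwu : ∀ i, i < l → w i ≠ u)
    (hh : ∀ i, i+1 < l → h i ∈ E ∧ u ∉ h i ∧ w i ∈ h i ∧ w (i+1) ∈ h i)
    (hhinj : ∀ i j, i+1 < l → j+1 < l → h i = h j → i = j)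
    (hf : ∀ i, i < l → fw i ∈ E ∧ u ∈ fw i ∧ w i ∈ fw i)
    (hfcard : ∀ i, i < l → (fw i).card = 3)
    (hA : fw 0 = fw (l-2)) (hB : fw 1 = fw (l-1)) : False := by
  have hu0 : u ∈ fw 0 := (hf 0 (by omega)).2.1
  have hu1 : u ∈ fw 1 := (hf 1 (by omega)).2.1
  have hu2 : u ∈ fw 2 := (hf 2 (by omega)).2.1
  have hfa : fw 0 = {u, w 0, w (l-2)} := by
    refine triple_eq (hfcard 0 (by omega)) hu0 (hf 0 (by omega)).2.2
      (hA ▸ (hf (l-2) (by omega)).2.2) ?_ ?_ ?_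
    · exact fun hx => (hwu 0 (by omega)) hx.symm
    · exact fun hx => (hwu (l-2) (by omega)) hx.symm
    · exact fun hx => by have := hwinj 0 (l-2) (by omega) (by omega) hx; omega
  have hfb : fw 1 = {u, w 1, w (l-1)} := by
    refine triple_eq (hfcard 1 (by omega)) hu1 (hf 1 (by omega)).2.2
      (hB ▸ (hf (l-1) (by omega)).2.2) ?_ ?_ ?_
    · exact fun hx => (hwu 1 (by omega)) hx.symm
    · exact fun hx => (hwu (l-1) (by omega)) hx.symm
    · exact fun hx => by have := hwinj 1 (l-1) (by omega) (by omega) hx; omega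
  have hw1a : w 1 ∉ fw 0 := by
    rw [hfa]
    simp only [Finset.mem_insert, Finset.mem_singleton]
    push_neg
    refine ⟨hwu 1 (by omega), ?_, ?_⟩
    · exact fun hx => by have := hwinj 1 0 (by omega) (by omega) hx; omega
    · exact fun hx => by have := hwinj 1 (l-2) (by omega) (by omega) hx; omega
  have hw2a : w 2 ∉ fw 0 := by
    rw [hfa]
    simp only [Finset.mem_insert, Finset.mem_singleton]
    push_neg
    refine ⟨hwu 2 (by omega), ?_, ?_⟩
    · exact fun hx => by have := hwinj 2 0 (by omega) (by omega) hx; omega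
    · exact fun hx => by have := hwinj 2 (l-2) (by omega) (by omega) hx; omega
  have hw2b : w 2 ∉ fw 1 := by
    rw [hfb]
    simp only [Finset.mem_insert, Finset.mem_singleton]
    push_neg
    refine ⟨hwu 2 (by omega), ?_, ?_⟩
    · exact fun hx => by have := hwinj 2 1 (by omega) (by omega) hx; omega
    · exact fun hx => by have := hwinj 2 (l-1) (by omega) (by omega) hx; omega
  apply hfree
  refine ⟨fun i => if i.val = 0 then u else if i.val = 1 then w 1
      else if i.val = 2 then w 0 else w (l+1-i.val),
    fun i => if i.val = 0 then fw 1 else if i.val = 1 then h 0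
      else if i.val = 2 then fw 0 else if i.val = l-1 then fw 2 else h (l - i.val),
    ?_, ?_, ?_⟩
  · intro i j hij
    have hi := i.isLt; have hj := j.isLt
    apply Fin.ext
    simp only at hij
    split_ifs at hij
    all_goals try omega
    all_goals try (exact absurd hij.symm (hwu 1 (by omega)))
    all_goals try (exact absurd hij (hwu 1 (by omega)))
    all_goals try (exact absurd hij.symm (hwu 0 (by omega)))
    all_goals try (exact absurd hij (hwu 0 (by omega)))
    all_goals try (exact absurd hij.symm (hwu (l+1-j.val) (by omega)))
    all_goals try (exact absurd hij (hwu (l+1-i.val) (by omega)))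
    all_goals (have := hwinj _ _ (by omega) (by omega) hij; omega)
  · intro i j hij
    have hi := i.isLt; have hj := j.isLt
    apply Fin.ext
    simp only at hij
    split_ifs at hij
    all_goals try omega
    -- fw1 vs fw0 and symm
    all_goals try (exfalso; apply hw1a; rw [← hij]; exact (hf 1 (by omega)).2.2)
    all_goals try (exfalso; apply hw1a; rw [hij]; exact (hf 1 (by omega)).2.2)
    -- fw? vs fw2 and symm : w 2 ∈ fw 2
    all_goals try (exfalso; apply hw2a; rw [hij]; exact (hf 2 (by omega)).2.2)
    all_goals try (exfalso; apply hw2a; rw [← hij]; exact (hf 2 (by omega)).2.2)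
    all_goals try (exfalso; apply hw2b; rw [hij]; exact (hf 2 (by omega)).2.2)
    all_goals try (exfalso; apply hw2b; rw [← hij]; exact (hf 2 (by omega)).2.2)
    -- fw vs h 0
    all_goals try (exfalso; apply (hh 0 (by omega)).2.1; rw [← hij]; first | exact hu0 | exact hu1 | exact hu2)
    all_goals try (exfalso; apply (hh 0 (by omega)).2.1; rw [hij]; first | exact hu0 | exact hu1 | exact hu2)
    -- fw vs h (l - k)
    all_goals try (exfalso; apply (hh (l - j.val) (by omega)).2.1; rw [← hij]; first | exact hu0 | exact hu1 | exact hu2)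
    all_goals try (exfalso; apply (hh (l - i.val) (by omega)).2.1; rw [hij]; first | exact hu0 | exact hu1 | exact hu2)
    -- h 0 vs h (l-k) and h vs h
    all_goals (have := hhinj _ _ (by omega) (by omega) hij; omega)
  · intro i
    have hi := i.isLt
    simp only
    by_cases hlast : i.val = l - 1
    · have e1 : (i.val + 1) % l = 0 := by
        rw [hlast, (by omega : l - 1 + 1 = l)]; exact Nat.mod_self l
      rw [e1, hlast, if_neg (by omega : ¬(l-1 = 0)), if_neg (by omega : ¬(l-1 = 1)),
        if_neg (by omega : ¬(l-1 = 2)), if_pos rfl, if_neg (by omega : ¬(l-1 = 0)),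
        if_neg (by omega : ¬(l-1 = 1)), if_neg (by omega : ¬(l-1 = 2)), if_pos rfl,
        (by omega : l + 1 - (l-1) = 2)]
      exact ⟨(hf 2 (by omega)).1, (hf 2 (by omega)).2.2, hu2⟩
    · have e1 : (i.val + 1) % l = i.val + 1 := Nat.mod_eq_of_lt (by omega)
      rw [e1]
      by_cases h0 : i.val = 0
      · rw [h0, if_pos rfl, if_pos rfl, if_neg (by omega : ¬(0+1 = 0)), if_pos rfl]
        exact ⟨(hf 1 (by omega)).1, hu1, (hf 1 (by omega)).2.2⟩
      · by_cases h1 : i.val = 1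
        · rw [h1, if_neg (by omega : ¬(1 = 0)), if_pos rfl, if_neg (by omega : ¬(1 = 0)),
            if_pos rfl, if_neg (by omega : ¬(1+1 = 0)), if_neg (by omega : ¬(1+1 = 1)),
            if_pos rfl]
          obtain ⟨hhE, -, hx0, hx1⟩ := hh 0 (by omega)
          exact ⟨hhE, hx1, hx0⟩
        · by_cases h2 : i.val = 2
          · rw [h2, if_neg (by omega : ¬(2 = 0)), if_neg (by omega : ¬(2 = 1)), if_pos rfl,
              if_neg (by omega : ¬(2 = 0)), if_neg (by omega : ¬(2 = 1)), if_pos rfl,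
              if_neg (by omega : ¬(2+1 = 0)), if_neg (by omega : ¬(2+1 = 1)),
              if_neg (by omega : ¬(2+1 = 2))]
            refine ⟨(hf 0 (by omega)).1, (hf 0 (by omega)).2.2, ?_⟩
            rw [(by omega : l + 1 - (2+1) = l-2), hA]
            exact (hf (l-2) (by omega)).2.2
          · -- middle: 3 ≤ i.val ≤ l-2
            rw [if_neg h0, if_neg h1, if_neg h2, if_neg hlast, if_neg h0, if_neg h1,
              if_neg h2, if_neg (by omega : ¬(i.val+1 = 0)), if_neg (by omega : ¬(i.val+1 = 1)),
              if_neg (by omega : ¬(i.val+1 = 2)), (by omega : l + 1 - (i.val+1) = l - i.val)]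
            obtain ⟨hhE, -, hx0, hx1⟩ := hh (l - i.val) (by omega)
            rw [(by omega : l - i.val + 1 = l + 1 - i.val)] at hx1
            exact ⟨hhE, hx1, hx0⟩

lemma degen {α V : Type*} [DecidableEq V] (C : Finset α) (N : Finset V) (c : ℕ)
    (p : α → Finset V) (hpN : ∀ b ∈ C, p b ⊆ N) (hpne : ∀ b ∈ C, (p b).Nonempty)
    (hlow : ∀ W ⊆ N, W.Nonempty → ∃ x ∈ W, (C.filter (fun b => p b ⊆ W ∧ x ∈ p b)).card ≤ c) :
    C.card ≤ c * N.card := by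
  have hempty : ∀ (W : Finset V), W = ∅ → (C.filter (fun b => p b ⊆ W)).card = 0 := by
    intro W hW
    rw [Finset.card_eq_zero, Finset.filter_eq_empty_iff]
    intro b hb hsub
    obtain ⟨x, hx⟩ := hpne b hb
    exact absurd (hsub hx) (by simp [hW])
  suffices H : ∀ n (W : Finset V), W ⊆ N → W.card ≤ n →
      (C.filter (fun b => p b ⊆ W)).card ≤ c * W.card by
    have h2 := H N.card N Finset.Subset.rfl le_rfl
    rwa [Finset.filter_true_of_mem (fun b hb => hpN b hb)] at h2
  intro n
  induction n with
  | zero =>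
    intro W hWN hW
    rw [hempty W (Finset.card_eq_zero.mp (by omega))]
    exact Nat.zero_le _
  | succ n ih =>
    intro W hWN hW
    rcases W.eq_empty_or_nonempty with rfl | hne
    · rw [hempty ∅ rfl]; exact Nat.zero_le _
    obtain ⟨x, hxW, hdeg⟩ := hlow W hWN hne
    have hsplit : C.filter (fun b => p b ⊆ W) ⊆
        (C.filter (fun b => p b ⊆ W.erase x)) ∪ (C.filter (fun b => p b ⊆ W ∧ x ∈ p b)) := by
      intro b hb
      rw [Finset.mem_filter] at hb
      rw [Finset.mem_union, Finset.mem_filter, Finset.mem_filter]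
      by_cases hx : x ∈ p b
      · exact Or.inr ⟨hb.1, hb.2, hx⟩
      · exact Or.inl ⟨hb.1, fun y hy => Finset.mem_erase.mpr
          ⟨fun hyx => hx (hyx ▸ hy), hb.2 hy⟩⟩
    have hcard1 : (W.erase x).card = W.card - 1 := Finset.card_erase_of_mem hxW
    have h1 : (C.filter (fun b => p b ⊆ W.erase x)).card ≤ c * (W.erase x).card :=
      ih (W.erase x) ((Finset.erase_subset _ _).trans hWN) (by omega)
    have hWpos : 1 ≤ W.card := hne.card_pos
    calc (C.filter (fun b => p b ⊆ W)).card
        ≤ _ := Finset.card_le_card hsplit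
      _ ≤ _ + _ := Finset.card_union_le _ _
      _ ≤ c * (W.card - 1) + c := by rw [← hcard1]; exact Nat.add_le_add h1 hdeg
      _ = c * (W.card - 1 + 1) := by rw [Nat.mul_succ]
      _ = c * W.card := by rw [(by omega : W.card - 1 + 1 = W.card)]

/-- In a connected linear 3-uniform Berge-`C_l`-free hypergraph (`l ≥ 5`),
`2e_2(N_u) + 3e_3(N_u) ≤ (6l-13)·d_u`. -/
theorem eTwo_eThree_bound {V : Type*} [Fintype V] [DecidableEq V]
    (E : Finset (Finset V)) (l : ℕ) (hl : 5 ≤ l)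
    (hunif : ∀ e ∈ E, e.card = 3)
    (hlin : ∀ e ∈ E, ∀ f ∈ E, e ≠ f → (e ∩ f).card ≤ 1)
    (hconn : ∀ u v : V, Relation.ReflTransGen (fun a b => ∃ e ∈ E, a ∈ e ∧ b ∈ e) u v)
    (hfree : BergeCycleFree E l) (u : V) :
    2 * (eCount E (hNbhd E u) 2 : ℝ) + 3 * (eCount E (hNbhd E u) 3 : ℝ)
      ≤ (6 * (l : ℝ) - 13) * (hDeg E u : ℝ) := by
  classical
  set N := hNbhd E u with hN
  set d := hDeg E u with hd
  have huN : u ∉ N := by simp [hN, hNbhd]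
  have hmemN : ∀ x, x ∈ N ↔ (x ≠ u ∧ ∃ e ∈ E, u ∈ e ∧ x ∈ e) := by
    intro x; simp [hN, hNbhd]
  -- the edges through u
  set F := E.filter (fun e => u ∈ e) with hF
  have hdF : d = F.card := rfl
  have herase : ∀ e ∈ F, e.erase u ⊆ N := by
    intro e he x hx
    rw [Finset.mem_filter] at he
    rw [Finset.mem_erase] at hx
    exact (hmemN x).mpr ⟨hx.1, e, he.1, he.2, hx.2⟩
  have hNcard : N.card = 2 * d := by
    have hNeq : N = F.biUnion (fun e => e.erase u) := by
      apply Finset.Subset.antisymm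
      · intro x hx
        obtain ⟨hxu, e, heE, hue, hxe⟩ := (hmemN x).mp hx
        exact Finset.mem_biUnion.mpr ⟨e, Finset.mem_filter.mpr ⟨heE, hue⟩,
          Finset.mem_erase.mpr ⟨hxu, hxe⟩⟩
      · intro x hx
        obtain ⟨e, heF, hxe⟩ := Finset.mem_biUnion.mp hx
        exact herase e heF hxe
    rw [hNeq, Finset.card_biUnion, hdF]
    · rw [Finset.sum_congr rfl (fun e he => ?_), Finset.sum_const, smul_eq_mul, Nat.mul_comm]
      rw [Finset.mem_filter] at he
      rw [Finset.card_erase_of_mem he.2, hunif e he.1]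
    · intro e he e' he' hne
      rw [Finset.mem_coe, Finset.mem_filter] at he he'
      rw [Function.onFun, Finset.disjoint_left]
      intro x hx hx'
      rw [Finset.mem_erase] at hx hx'
      have hsub : ({u, x} : Finset V) ⊆ e ∩ e' := by
        intro y hy
        rcases Finset.mem_insert.mp hy with rfl | hy
        · exact Finset.mem_inter.mpr ⟨he.2, he'.2⟩
        · rw [Finset.mem_singleton] at hy
          subst hy
          exact Finset.mem_inter.mpr ⟨hx.2, hx'.2⟩
      have h2 : ({u, x} : Finset V).card = 2 := by
        rw [Finset.card_insert_of_notMem (by simp [Ne.symm hx.1]), Finset.card_singleton]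
      have := Finset.card_le_card hsub
      have := hlin e he.1 e' he'.1 hne
      omega
  -- central edge family
  set C := E.filter (fun e => u ∉ e ∧ 2 ≤ (e ∩ N).card) with hC
  set C2 := C.filter (fun e => (e ∩ N).card = 2) with hC2
  set C3 := C.filter (fun e => (e ∩ N).card = 3) with hC3
  have hcount : 2 * eCount E N 2 + 3 * eCount E N 3 ≤ 2 * d + 2 * C2.card + 3 * C3.card := by
    have he2 : eCount E N 2 ≤ d + C2.card := by
      have hsplit := Finset.filter_union_filter_not_eq (fun e => u ∈ e)
        (E.filter (fun e => (e ∩ N).card = 2))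
      have h1 : (E.filter (fun e => (e ∩ N).card = 2)).filter (fun e => u ∈ e) ⊆ F := by
        intro e he
        rw [Finset.mem_filter] at he ⊢
        rw [Finset.mem_filter] at he
        exact ⟨he.1.1, he.2⟩
      have h2 : (E.filter (fun e => (e ∩ N).card = 2)).filter (fun e => ¬ u ∈ e) ⊆ C2 := by
        intro e he
        rw [Finset.mem_filter] at he
        rw [Finset.mem_filter] at he
        rw [hC2, Finset.mem_filter, hC, Finset.mem_filter]
        exact ⟨⟨he.1.1, he.2, by omega⟩, he.1.2⟩
      have hcu := Finset.card_union_le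
        ((E.filter (fun e => (e ∩ N).card = 2)).filter (fun e => u ∈ e))
        ((E.filter (fun e => (e ∩ N).card = 2)).filter (fun e => ¬ u ∈ e))
      rw [hsplit] at hcu
      refine le_trans hcu (Nat.add_le_add ?_ (Finset.card_le_card h2))
      rw [hdF]
      exact Finset.card_le_card h1
    have he3 : eCount E N 3 ≤ C3.card := by
      apply Finset.card_le_card
      intro e he
      rw [Finset.mem_filter] at he
      have hsubN : e ∩ N = e := Finset.eq_of_subset_of_card_le
        Finset.inter_subset_left (by rw [he.2, hunif e he.1])
      have hue : u ∉ e := by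
        intro hu
        have : u ∈ e ∩ N := by rw [hsubN]; exact hu
        exact huN (Finset.mem_inter.mp this).2
      rw [hC3, Finset.mem_filter, hC, Finset.mem_filter]
      exact ⟨⟨he.1, hue, by omega⟩, he.2⟩
    omega
  -- choose sigma
  have hsig : ∀ e : Finset V, ∃ t, e ∈ C → t ⊆ e ∩ N ∧ t.card = 2 := by
    intro e
    by_cases he : e ∈ C
    · have he' := he
      rw [hC, Finset.mem_filter] at he'
      obtain ⟨t, hts, htc⟩ := Finset.exists_subset_card_eq he'.2.2
      exact ⟨t, fun _ => ⟨hts, htc⟩⟩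
    · exact ⟨∅, fun h => absurd h he⟩
  choose σ hσ using hsig
  have hσsub : ∀ e ∈ C, σ e ⊆ e ∩ N := fun e he => (hσ e he).1
  have hσcard : ∀ e ∈ C, (σ e).card = 2 := fun e he => (hσ e he).2
  have hCE : ∀ e ∈ C, e ∈ E ∧ u ∉ e := by
    intro e he
    rw [hC, Finset.mem_filter] at he
    exact ⟨he.1, he.2.1⟩
  have hσinj : ∀ e ∈ C, ∀ e' ∈ C, σ e = σ e' → e = e' := by
    intro e he e' he' hee
    by_contra hne
    have h1 : σ e ⊆ e ∩ e' := by
      intro x hx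
      have h2 := hσsub e he hx
      have h3 := hσsub e' he' (hee ▸ hx)
      exact Finset.mem_inter.mpr ⟨(Finset.mem_inter.mp h2).1, (Finset.mem_inter.mp h3).1⟩
    have hc1 := Finset.card_le_card h1
    have hc2 := hlin e (hCE e he).1 e' (hCE e' he').1 hne
    have hc3 := hσcard e he
    omega
  by_cases hdich : ∀ W ⊆ N, W.Nonempty →
      ∃ x ∈ W, (C.filter (fun b => σ b ⊆ W ∧ x ∈ σ b)).card ≤ l - 3
  · have hCb : C.card ≤ (l-3) * N.card := by
      refine degen C N (l-3) σ
        (fun b hb => (hσsub b hb).trans Finset.inter_subset_right)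
        (fun b hb => Finset.card_pos.mp (by rw [hσcard b hb]; omega)) hdich
    have hdisj : Disjoint C2 C3 := by
      rw [Finset.disjoint_left]
      intro a ha ha'
      rw [hC2, Finset.mem_filter] at ha
      rw [hC3, Finset.mem_filter] at ha'
      omega
    have h23 : C2.card + C3.card ≤ C.card := by
      rw [← Finset.card_union_of_disjoint hdisj]
      exact Finset.card_le_card (Finset.union_subset (Finset.filter_subset _ _)
        (Finset.filter_subset _ _))
    have hkey : 2 * eCount E N 2 + 3 * eCount E N 3 + 13 * d ≤ 6 * l * d := by
      have hCb' : C.card ≤ (l-3) * (2*d) := by rw [← hNcard]; exact hCb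
      obtain ⟨k, rfl⟩ : ∃ k, l = k + 5 := ⟨l - 5, by omega⟩
      rw [(by omega : k + 5 - 3 = k + 2)] at hCb'
      nlinarith [hcount, hCb', h23]
    have hcast : ((2 * eCount E N 2 + 3 * eCount E N 3 + 13 * d : ℕ) : ℝ) ≤
        ((6 * l * d : ℕ) : ℝ) := Nat.cast_le.mpr hkey
    push_cast at hcast
    linarith
  · exfalso
    push_neg at hdich
    obtain ⟨W, hWN, hWne, hbig⟩ := hdich
    have hfex : ∀ x : V, ∃ g : Finset V, x ∈ N → g ∈ E ∧ u ∈ g ∧ x ∈ g ∧ g.card = 3 := by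
      intro x
      by_cases hx : x ∈ N
      · obtain ⟨hxu, e, heE, hue, hxe⟩ := (hmemN x).mp hx
        exact ⟨e, fun _ => ⟨heE, hue, hxe, hunif e heE⟩⟩
      · exact ⟨∅, fun h => absurd h hx⟩
    choose f hf using hfex
    have hnbr : ∀ x ∈ W, l - 2 ≤
        (W.filter (fun y => ∃ e ∈ C, σ e ⊆ W ∧ σ e = {x, y})).card := by
      intro x hxW
      have hx' := hbig x hxW
      set T := C.filter (fun b => σ b ⊆ W ∧ x ∈ σ b) with hT
      have hothex : ∀ b : Finset V, ∃ y, b ∈ T → (y ≠ x ∧ σ b = {x, y}) := by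
        intro b
        by_cases hb : b ∈ T
        · have hb' := hb
          rw [hT, Finset.mem_filter] at hb'
          obtain ⟨hbC, hbW, hxb⟩ := hb'
          obtain ⟨a, c, hac, habc⟩ := Finset.card_eq_two.mp (hσcard b hbC)
          rw [habc, Finset.mem_insert, Finset.mem_singleton] at hxb
          rcases hxb with rfl | rfl
          · exact ⟨c, fun _ => ⟨Ne.symm hac, habc⟩⟩
          · exact ⟨a, fun _ => ⟨hac, by rw [habc]; exact Finset.pair_comm a x⟩⟩
        · exact ⟨x, fun h => absurd h hb⟩
      choose oth hoth using hothex
      have hmap : ∀ b ∈ T, oth b ∈ W.filter (fun y => ∃ e ∈ C, σ e ⊆ W ∧ σ e = {x, y}) := by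
        intro b hb
        obtain ⟨hyx, hpair⟩ := hoth b hb
        have hb' := hb
        rw [hT, Finset.mem_filter] at hb'
        have hyW : oth b ∈ W := hb'.2.1 (by
          rw [hpair]; exact Finset.mem_insert.mpr (Or.inr (Finset.mem_singleton_self _)))
        exact Finset.mem_filter.mpr ⟨hyW, b, hb'.1, hb'.2.1, hpair⟩
      have hinj : Set.InjOn oth T := by
        intro b hb b' hb' hbb
        have hbT := Finset.mem_coe.mp hb
        have hbT' := Finset.mem_coe.mp hb'
        obtain ⟨_, hp⟩ := hoth b hbT
        obtain ⟨_, hp'⟩ := hoth b' hbT'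
        have hbC := (Finset.mem_filter.mp (hT ▸ hbT)).1
        have hbC' := (Finset.mem_filter.mp (hT ▸ hbT')).1
        exact hσinj b hbC b' hbC' (by rw [hp, hp', hbb])
      have hle := Finset.card_le_card_of_injOn oth hmap hinj
      omega
    -- paths
    set AdjP : V → V → Prop := fun a b => ∃ e ∈ C, σ e ⊆ W ∧ σ e = {a, b} with hAdjP
    set P : ℕ → Prop := fun m => ∃ w : ℕ → V, (∀ i, i < m → w i ∈ W) ∧
        (∀ i j, i < m → j < m → w i = w j → i = j) ∧
        (∀ i, i+1 < m → AdjP (w i) (w (i+1))) with hP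
    have hP1 : P 1 := by
      obtain ⟨x0, hx0⟩ := hWne
      exact ⟨fun _ => x0, fun i _ => hx0, fun i j hi hj _ => by omega, fun i hi => by omega⟩
    have hPbound : ∀ m, P m → m ≤ W.card := by
      intro m hm
      obtain ⟨w, hwW, hwinj, _⟩ := hm
      have hcard : ((Finset.range m).image w).card = m := by
        rw [Finset.card_image_of_injOn, Finset.card_range]
        intro a ha b hb hab
        exact hwinj a b (Finset.mem_range.mp (Finset.mem_coe.mp ha))
          (Finset.mem_range.mp (Finset.mem_coe.mp hb)) hab
      rw [← hcard]
      apply Finset.card_le_card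
      intro y hy
      obtain ⟨i, hi, rfl⟩ := Finset.mem_image.mp hy
      exact hwW i (Finset.mem_range.mp hi)
    set m₀ := Nat.findGreatest P W.card with hm₀
    have hWpos : 1 ≤ W.card := hWne.card_pos
    have hPm₀ : P m₀ := Nat.findGreatest_spec hWpos hP1
    have hm₀1 : 1 ≤ m₀ := Nat.le_findGreatest hWpos hP1
    have hm₀max : ¬ P (m₀ + 1) := by
      by_cases hle : m₀ + 1 ≤ W.card
      · exact Nat.findGreatest_is_greatest (by omega) hle
      · exact fun hp => absurd (hPbound _ hp) (by omega)
    obtain ⟨w, hwW, hwinj, hwadj⟩ := hPm₀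
    have hwN : ∀ i, i < m₀ → w i ∈ N := fun i hi => hWN (hwW i hi)
    have hwu : ∀ i, i < m₀ → w i ≠ u := fun i hi hx => huN (hx ▸ hwN i hi)
    have hext : ∀ y, AdjP y (w 0) → ∃ i, i < m₀ ∧ w i = y := by
      intro y hadj
      by_contra hnot
      push_neg at hnot
      apply hm₀max
      have hyW : y ∈ W := by
        obtain ⟨e, heC, hsW, hpair⟩ := hadj
        exact hsW (by rw [hpair]; exact Finset.mem_insert_self _ _)
      refine ⟨fun i => if i = 0 then y else w (i-1), ?_, ?_, ?_⟩
      · intro i hi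
        dsimp only
        split_ifs with h0
        · exact hyW
        · exact hwW (i-1) (by omega)
      · intro i j hi hj hij
        dsimp only at hij
        split_ifs at hij with h0 h1 h1
        · omega
        · exact absurd hij.symm (hnot (j-1) (by omega))
        · exact absurd hij (hnot (i-1) (by omega))
        · have := hwinj (i-1) (j-1) (by omega) (by omega) hij; omega
      · intro i hi
        dsimp only
        by_cases h0 : i = 0
        · subst h0
          rw [if_pos rfl, if_neg (by omega : ¬(0+1 = 0)), (by omega : 0 + 1 - 1 = 0)]
          exact hadj
        · rw [if_neg h0, if_neg (by omega : ¬(i+1 = 0)), (by omega : i + 1 - 1 = (i-1) + 1)]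
          exact hwadj (i-1) (by omega)
    set S := ((Finset.range m₀).image w).erase (w 0) with hS
    have hwrinj : Set.InjOn w (Finset.range m₀) := by
      intro a ha b hb hab
      exact hwinj a b (Finset.mem_range.mp (Finset.mem_coe.mp ha))
        (Finset.mem_range.mp (Finset.mem_coe.mp hb)) hab
    have hnbr0sub : W.filter (fun y => ∃ e ∈ C, σ e ⊆ W ∧ σ e = {w 0, y}) ⊆ S := by
      intro y hy
      obtain ⟨hyW, e, heC, hsW, hpair⟩ := Finset.mem_filter.mp hy
      have hy0 : y ≠ w 0 := by
        intro h0
        have hcc := hσcard e heC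
        rw [hpair, h0] at hcc
        simp at hcc
      obtain ⟨i, hi, hiy⟩ := hext y ⟨e, heC, hsW, by rw [hpair]; exact Finset.pair_comm _ _⟩
      exact Finset.mem_erase.mpr ⟨hy0, Finset.mem_image.mpr ⟨i, Finset.mem_range.mpr hi, hiy⟩⟩
    have hScard : S.card = m₀ - 1 := by
      rw [hS, Finset.card_erase_of_mem, Finset.card_image_of_injOn hwrinj, Finset.card_range]
      exact Finset.mem_image.mpr ⟨0, Finset.mem_range.mpr (by omega), rfl⟩
    have hm₀l : l - 1 ≤ m₀ := by
      have h1 := hnbr (w 0) (hwW 0 (by omega))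
      have h2 := Finset.card_le_card hnbr0sub
      omega
    have hhex : ∀ i, ∃ g, i + 1 < m₀ → (g ∈ C ∧ σ g ⊆ W ∧ σ g = {w i, w (i+1)}) := by
      intro i
      by_cases hi : i + 1 < m₀
      · obtain ⟨e, heC, hsW, hpair⟩ := hwadj i hi
        exact ⟨e, fun _ => ⟨heC, hsW, hpair⟩⟩
      · exact ⟨∅, fun hh => absurd hh hi⟩
    choose hφ hhφ using hhex
    have hhprop : ∀ i, i + 1 < m₀ → hφ i ∈ E ∧ u ∉ hφ i ∧ w i ∈ hφ i ∧ w (i+1) ∈ hφ i := by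
      intro i hi
      obtain ⟨hC1, hW1, hp1⟩ := hhφ i hi
      have h1 : w i ∈ σ (hφ i) := by rw [hp1]; exact Finset.mem_insert_self _ _
      have h2 : w (i+1) ∈ σ (hφ i) := by
        rw [hp1]; exact Finset.mem_insert.mpr (Or.inr (Finset.mem_singleton_self _))
      have hsub := hσsub _ hC1
      exact ⟨(hCE _ hC1).1, (hCE _ hC1).2,
        (Finset.mem_inter.mp (hsub h1)).1, (Finset.mem_inter.mp (hsub h2)).1⟩
    have hhinj : ∀ i j, i+1 < m₀ → j+1 < m₀ → hφ i = hφ j → i = j := by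
      intro i j hi hj hij
      have hp1 := (hhφ i hi).2.2
      have hp2 := (hhφ j hj).2.2
      rw [hij, hp2] at hp1
      have hm1 : w i ∈ ({w j, w (j+1)} : Finset V) := by
        rw [hp1]; exact Finset.mem_insert_self _ _
      have hm2 : w (i+1) ∈ ({w j, w (j+1)} : Finset V) := by
        rw [hp1]; exact Finset.mem_insert.mpr (Or.inr (Finset.mem_singleton_self _))
      rw [Finset.mem_insert, Finset.mem_singleton] at hm1 hm2
      have e1 : i = j ∨ i = j+1 := by
        rcases hm1 with hh | hh
        · exact Or.inl (hwinj i j (by omega) (by omega) hh)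
        · exact Or.inr (hwinj i (j+1) (by omega) (by omega) hh)
      have e2 : i+1 = j ∨ i+1 = j+1 := by
        rcases hm2 with hh | hh
        · exact Or.inl (hwinj (i+1) j (by omega) (by omega) hh)
        · exact Or.inr (hwinj (i+1) (j+1) (by omega) (by omega) hh)
      omega
    have hfprop : ∀ i, i < m₀ → f (w i) ∈ E ∧ u ∈ f (w i) ∧ w i ∈ f (w i) := fun i hi =>
      ⟨(hf (w i) (hwN i hi)).1, (hf (w i) (hwN i hi)).2.1, (hf (w i) (hwN i hi)).2.2.1⟩
    have hfcard3 : ∀ i, i < m₀ → (f (w i)).card = 3 := fun i hi => (hf (w i) (hwN i hi)).2.2.2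
    by_cases hml : l ≤ m₀
    · by_cases hcase1 : f (w 0) = f (w (l-2))
      · by_cases hcase2 : f (w 1) = f (w (l-1))
        · exact constructC E l hl hfree u w hφ (fun i => f (w i))
            (fun i j hi hj => hwinj i j (by omega) (by omega))
            (fun i hi => hwu i (by omega))
            (fun i hi => hhprop i (by omega))
            (fun i j hi hj => hhinj i j (by omega) (by omega))
            (fun i hi => hfprop i (by omega))
            (fun i hi => hfcard3 i (by omega))
            hcase1 hcase2
        · refine constructA E l hl hfree u (fun i => w (i+1)) (fun i => hφ (i+1))
            (fun i => f (w (i+1)))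
            (fun i j hi hj hij => by
              have := hwinj (i+1) (j+1) (by omega) (by omega) hij; omega)
            (fun i hi => hwu (i+1) (by omega))
            (fun i hi => hhprop (i+1) (by omega))
            (fun i j hi hj hij => by
              have := hhinj (i+1) (j+1) (by omega) (by omega) hij; omega)
            (fun i hi => hfprop (i+1) (by omega))
            (by
              show f (w (0+1)) ≠ f (w (l-2+1))
              rw [(by omega : l-2+1 = l-1), (by norm_num : (0:ℕ)+1 = 1)]
              exact hcase2)
      · exact constructA E l hl hfree u w hφ (fun i => f (w i))
            (fun i j hi hj => hwinj i j (by omega) (by omega))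
            (fun i hi => hwu i (by omega))
            (fun i hi => hhprop i (by omega))
            (fun i j hi hj => hhinj i j (by omega) (by omega))
            (fun i hi => hfprop i (by omega))
            hcase1
    · have hm₀eq : m₀ = l - 1 := by omega
      have hset : W.filter (fun y => ∃ e ∈ C, σ e ⊆ W ∧ σ e = {w 0, y}) = S := by
        apply Finset.eq_of_subset_of_card_le hnbr0sub
        have := hnbr (w 0) (hwW 0 (by omega))
        omega
      have hwl2S : w (l-2) ∈ S := Finset.mem_erase.mpr
        ⟨fun h0 => by have := hwinj (l-2) 0 (by omega) (by omega) h0; omega,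
         Finset.mem_image.mpr ⟨l-2, Finset.mem_range.mpr (by omega), rfl⟩⟩
      have hclose : ∃ e ∈ C, σ e ⊆ W ∧ σ e = {w 0, w (l-2)} := by
        have h2 := hwl2S
        rw [← hset] at h2
        exact (Finset.mem_filter.mp h2).2
      obtain ⟨hc, hcC, hcW, hcpair⟩ := hclose
      have hcE' := hCE hc hcC
      have hcmem0 : w 0 ∈ hc := by
        have h2 := hσsub hc hcC (by rw [hcpair]; exact Finset.mem_insert_self _ _)
        exact (Finset.mem_inter.mp h2).1
      have hcmeml : w (l-2) ∈ hc := by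
        have h2 := hσsub hc hcC (by
          rw [hcpair]; exact Finset.mem_insert.mpr (Or.inr (Finset.mem_singleton_self _)))
        exact (Finset.mem_inter.mp h2).1
      have hcne : ∀ i, i+1 < l-1 → hc ≠ hφ i := by
        intro i hi heq
        have hp := (hhφ i (by omega)).2.2
        rw [← heq, hcpair] at hp
        have hm1 : w 0 ∈ ({w i, w (i+1)} : Finset V) := by
          rw [← hp]; exact Finset.mem_insert_self _ _
        have hm2 : w (l-2) ∈ ({w i, w (i+1)} : Finset V) := by
          rw [← hp]; exact Finset.mem_insert.mpr (Or.inr (Finset.mem_singleton_self _))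
        rw [Finset.mem_insert, Finset.mem_singleton] at hm1 hm2
        have e1 : 0 = i ∨ 0 = i+1 := by
          rcases hm1 with hh | hh
          · exact Or.inl (hwinj 0 i (by omega) (by omega) hh)
          · exact Or.inr (hwinj 0 (i+1) (by omega) (by omega) hh)
        have e2 : l-2 = i ∨ l-2 = i+1 := by
          rcases hm2 with hh | hh
          · exact Or.inl (hwinj (l-2) i (by omega) (by omega) hh)
          · exact Or.inr (hwinj (l-2) (i+1) (by omega) (by omega) hh)
        omega
      by_cases hcase1 : f (w 0) = f (w (l-2))
      · have hfa : f (w 0) = {u, w 0, w (l-2)} := by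
          refine triple_eq (hfcard3 0 (by omega)) (hfprop 0 (by omega)).2.1
            (hfprop 0 (by omega)).2.2 (by rw [hcase1]; exact (hfprop (l-2) (by omega)).2.2)
            (fun hh => hwu 0 (by omega) hh.symm) (fun hh => hwu (l-2) (by omega) hh.symm)
            (fun hh => by have := hwinj 0 (l-2) (by omega) (by omega) hh; omega)
        have heqq : f (w 1) ≠ f (w 0) := by
          intro h1
          have h2 : w 1 ∈ f (w 0) := by rw [← h1]; exact (hfprop 1 (by omega)).2.2
          rw [hfa, Finset.mem_insert, Finset.mem_insert, Finset.mem_singleton] at h2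
          rcases h2 with hh | hh | hh
          · exact hwu 1 (by omega) hh
          · have := hwinj 1 0 (by omega) (by omega) hh; omega
          · have := hwinj 1 (l-2) (by omega) (by omega) hh; omega
        exact constructD E l hl hfree u w hφ (fun i => f (w i))
          (fun i j hi hj => hwinj i j (by omega) (by omega))
          (fun i hi => hwu i (by omega))
          (fun i hi => hhprop i (by omega))
          (fun i j hi hj => hhinj i j (by omega) (by omega))
          (fun i hi => hfprop i (by omega))
          hc hcE'.1 hcE'.2 hcmem0 hcmeml hcne heqq
      · exact constructA E l hl hfree u w hφ (fun i => f (w i))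
          (fun i j hi hj => hwinj i j (by omega) (by omega))
          (fun i hi => hwu i (by omega))
          (fun i hi => hhprop i (by omega))
          (fun i j hi hj => hhinj i j (by omega) (by omega))
          (fun i hi => hfprop i (by omega))
          hcase1
end

section
/- Let H be a connected linear k-uniform hypergraph (k ≥ 3) containing no Berge-B_s, where s ≥ 2. Then for any two adjacent vertices x, y of H, the number of common neighbors |N_{xy}| satisfies |N_{xy}| ≤ (k-1)(2s-1) - s. -/
attribute [local instance] Classical.propDecidable

/-- `H` contains no Berge-`B_s`, where `B_s` is the book of `s` triangles sharing a
common edge `{a,b}`: there do not exist distinct vertices `a, b, c_1, …, c_s` and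
`2s+1` distinct hyperedges `e₀ ⊇ {a,b}`, `f i ⊇ {a, c i}`, `g i ⊇ {b, c i}`. -/
def BergeBookFree {V : Type*} (E : Finset (Finset V)) (s : ℕ) : Prop :=
  ¬ ∃ (a b : V) (c : Fin s → V) (e₀ : Finset V) (f g : Fin s → Finset V),
      a ≠ b ∧ Function.Injective c ∧ (∀ i, c i ≠ a ∧ c i ≠ b) ∧
      e₀ ∈ E ∧ a ∈ e₀ ∧ b ∈ e₀ ∧
      (∀ i, f i ∈ E ∧ a ∈ f i ∧ c i ∈ f i) ∧
      (∀ i, g i ∈ E ∧ b ∈ g i ∧ c i ∈ g i) ∧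
      Function.Injective f ∧ Function.Injective g ∧
      (∀ i j, f i ≠ g j) ∧ (∀ i, e₀ ≠ f i ∧ e₀ ≠ g i)

/-- In a connected linear `k`-uniform Berge-`B_s`-free hypergraph (`k ≥ 3`, `s ≥ 2`),
any two adjacent vertices `x, y` satisfy `|N_{xy}| ≤ (k-1)(2s-1) - s`. -/
theorem common_nbhd_bound {V : Type*} [Fintype V] [DecidableEq V]
    (E : Finset (Finset V)) (k s : ℕ) (hk : 3 ≤ k) (hs : 2 ≤ s)
    (hunif : ∀ e ∈ E, e.card = k)
    (hlin : ∀ e ∈ E, ∀ f ∈ E, e ≠ f → (e ∩ f).card ≤ 1)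
    (hconn : ∀ u v : V, Relation.ReflTransGen (fun a b => ∃ e ∈ E, a ∈ e ∧ b ∈ e) u v)
    (hfree : BergeBookFree E s)
    (x y : V) (hadj : ∃ e ∈ E, x ∈ e ∧ y ∈ e ∧ x ≠ y) :
    (((hNbhd E x) ∩ (hNbhd E y)).card : ℝ)
      ≤ ((k : ℝ) - 1) * (2 * (s : ℝ) - 1) - (s : ℝ) := by
  classical
  obtain ⟨e₀, he₀, hxe₀, hye₀, hxy⟩ := hadj
  set N := (hNbhd E x) ∩ (hNbhd E y) with hN
  have hNmem : ∀ c ∈ N, c ≠ x ∧ c ≠ y ∧ (∃ e ∈ E, x ∈ e ∧ c ∈ e) ∧ (∃ e ∈ E, y ∈ e ∧ c ∈ e) := by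
    intro c hc
    simp only [hN, Finset.mem_inter, hNbhd, Finset.mem_filter, Finset.mem_univ, true_and] at hc
    exact ⟨hc.1.1, hc.2.1, hc.1.2, hc.2.2⟩
  have uniq : ∀ (u w : V), u ≠ w → ∀ e ∈ E, ∀ e' ∈ E, u ∈ e → w ∈ e → u ∈ e' → w ∈ e' → e = e' := by
    intro u w huw e he e' he' hu hw hu' hw'
    by_contra hne
    have h1 := hlin e he e' he' hne
    have h2 : ({u, w} : Finset V) ⊆ e ∩ e' := by
      intro z hz
      simp only [Finset.mem_insert, Finset.mem_singleton] at hz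
      rcases hz with rfl | rfl <;> simp [Finset.mem_inter, hu, hw, hu', hw']
    have h3 := Finset.card_le_card h2
    rw [Finset.card_insert_of_notMem (by simpa using huw), Finset.card_singleton] at h3
    omega
  set fE : V → Finset V := fun c => if h : ∃ e ∈ E, x ∈ e ∧ c ∈ e then h.choose else ∅ with hfEdef
  set gE : V → Finset V := fun c => if h : ∃ e ∈ E, y ∈ e ∧ c ∈ e then h.choose else ∅ with hgEdef
  have hfE : ∀ c ∈ N, fE c ∈ E ∧ x ∈ fE c ∧ c ∈ fE c := by
    intro c hc
    obtain ⟨_, _, h, _⟩ := hNmem c hc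
    simp only [hfEdef, dif_pos h]
    exact h.choose_spec
  have hgE : ∀ c ∈ N, gE c ∈ E ∧ y ∈ gE c ∧ c ∈ gE c := by
    intro c hc
    obtain ⟨_, _, _, h⟩ := hNmem c hc
    simp only [hgEdef, dif_pos h]
    exact h.choose_spec
  -- uniqueness of the edge through x,c and y,c
  have hfE_uniq : ∀ c ∈ N, ∀ e ∈ E, x ∈ e → c ∈ e → e = fE c := by
    intro c hc e he hxe hce
    exact uniq x c (Ne.symm (hNmem c hc).1) e he (fE c) (hfE c hc).1 hxe hce
      (hfE c hc).2.1 (hfE c hc).2.2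
  have hgE_uniq : ∀ c ∈ N, ∀ e ∈ E, y ∈ e → c ∈ e → e = gE c := by
    intro c hc e he hye hce
    exact uniq y c (Ne.symm (hNmem c hc).2.1) e he (gE c) (hgE c hc).1 hye hce
      (hgE c hc).2.1 (hgE c hc).2.2
  set N' := N \ e₀ with hN'
  -- edges fE c, gE c for c ∈ N' avoid e₀ and each other
  have hfne₀ : ∀ c ∈ N', fE c ≠ e₀ := by
    intro c hc heq
    have hcN : c ∈ N := (Finset.mem_sdiff.mp hc).1
    have : c ∈ e₀ := heq ▸ (hfE c hcN).2.2
    exact (Finset.mem_sdiff.mp hc).2 this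
  have hgne₀ : ∀ c ∈ N', gE c ≠ e₀ := by
    intro c hc heq
    have hcN : c ∈ N := (Finset.mem_sdiff.mp hc).1
    have : c ∈ e₀ := heq ▸ (hgE c hcN).2.2
    exact (Finset.mem_sdiff.mp hc).2 this
  have hfgne : ∀ c ∈ N', ∀ c' ∈ N', fE c ≠ gE c' := by
    intro c hc c' hc' heq
    have hcN : c ∈ N := (Finset.mem_sdiff.mp hc).1
    have hc'N : c' ∈ N := (Finset.mem_sdiff.mp hc').1
    have hy' : y ∈ fE c := heq ▸ (hgE c' hc'N).2.1
    have : e₀ = fE c := uniq x y hxy e₀ he₀ (fE c) (hfE c hcN).1 hxe₀ hye₀ (hfE c hcN).2.1 hy'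
    exact hfne₀ c hc this.symm
  -- maximum rainbow subset
  set P : Finset (Finset V) := (N'.powerset).filter (fun T => Set.InjOn fE ↑T ∧ Set.InjOn gE ↑T) with hP
  have hPne : P.Nonempty := by
    refine ⟨∅, ?_⟩
    simp [hP, Set.injOn_empty]
  obtain ⟨R, hRP, hRmax⟩ := Finset.exists_max_image P (fun T => T.card) hPne
  have hRsub : R ⊆ N' := Finset.mem_powerset.mp (Finset.mem_filter.mp hRP).1
  obtain ⟨hRf, hRg⟩ := (Finset.mem_filter.mp hRP).2
  by_cases hcase : s ≤ R.card
  · exfalso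
    obtain ⟨T, hTR, hT⟩ := Finset.exists_subset_card_eq hcase
    have hTsub : Set.InjOn fE ↑T := hRf.mono (Finset.coe_subset.mpr hTR)
    have hTsubg : Set.InjOn gE ↑T := hRg.mono (Finset.coe_subset.mpr hTR)
    let eqv := T.equivFinOfCardEq hT
    set c : Fin s → V := fun i => (eqv.symm i : V) with hc
    have hcT : ∀ i, c i ∈ T := fun i => (eqv.symm i).2
    have hcN' : ∀ i, c i ∈ N' := fun i => hRsub (hTR (hcT i))
    have hcN : ∀ i, c i ∈ N := fun i => (Finset.mem_sdiff.mp (hcN' i)).1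
    have hcinj : Function.Injective c := by
      intro i j hij
      exact eqv.symm.injective (Subtype.coe_injective hij)
    apply hfree
    refine ⟨x, y, c, e₀, fun i => fE (c i), fun i => gE (c i), hxy, hcinj, ?_, he₀, hxe₀, hye₀,
      ?_, ?_, ?_, ?_, ?_, ?_⟩
    · exact fun i => ⟨(hNmem _ (hcN i)).1, (hNmem _ (hcN i)).2.1⟩
    · exact fun i => hfE _ (hcN i)
    · exact fun i => hgE _ (hcN i)
    · intro i j hij
      exact hcinj (hTsub (hcT i) (hcT j) hij)
    · intro i j hij
      exact hcinj (hTsubg (hcT i) (hcT j) hij)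
    · exact fun i j => hfgne _ (hcN' i) _ (hcN' j)
    · exact fun i => ⟨fun h => hfne₀ _ (hcN' i) h.symm, fun h => hgne₀ _ (hcN' i) h.symm⟩
  · push_neg at hcase
    -- covering argument
    have hcover : N' ⊆ R.biUnion (fun r => (fE r \ {x}) ∪ (gE r \ {y})) := by
      intro c hcN'
      have hcN : c ∈ N := (Finset.mem_sdiff.mp hcN').1
      by_cases hcR : c ∈ R
      · refine Finset.mem_biUnion.mpr ⟨c, hcR, ?_⟩
        refine Finset.mem_union_left _ (Finset.mem_sdiff.mpr ⟨(hfE c hcN).2.2, ?_⟩)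
        simp [(hNmem c hcN).1]
      · have hins : insert c R ∉ P := by
          intro hmem
          have := hRmax _ hmem
          rw [Finset.card_insert_of_notMem hcR] at this
          omega
        have hsub : insert c R ⊆ N' := Finset.insert_subset hcN' hRsub
        have hnotinj : ¬ (Set.InjOn fE ↑(insert c R) ∧ Set.InjOn gE ↑(insert c R)) := by
          intro h
          exact hins (Finset.mem_filter.mpr ⟨Finset.mem_powerset.mpr hsub, h⟩)
        by_contra hcnot
        have hforall : ∀ r ∈ R, fE r ≠ fE c ∧ gE r ≠ gE c := by
          intro r hr
          constructor
          · intro heq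
            apply hcnot
            refine Finset.mem_biUnion.mpr ⟨r, hr, Finset.mem_union_left _
              (Finset.mem_sdiff.mpr ⟨heq ▸ (hfE c hcN).2.2, ?_⟩)⟩
            simp [(hNmem c hcN).1]
          · intro heq
            apply hcnot
            refine Finset.mem_biUnion.mpr ⟨r, hr, Finset.mem_union_right _
              (Finset.mem_sdiff.mpr ⟨heq ▸ (hgE c hcN).2.2, ?_⟩)⟩
            simp [(hNmem c hcN).2.1]
        apply hnotinj
        constructor
        · intro a ha b hb hab
          simp only [Finset.coe_insert, Set.mem_insert_iff, Finset.mem_coe] at ha hb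
          rcases ha with rfl | ha <;> rcases hb with rfl | hb
          · rfl
          · exact absurd hab.symm (hforall b hb).1
          · exact absurd hab (hforall a ha).1
          · exact hRf ha hb hab
        · intro a ha b hb hab
          simp only [Finset.coe_insert, Set.mem_insert_iff, Finset.mem_coe] at ha hb
          rcases ha with rfl | ha <;> rcases hb with rfl | hb
          · rfl
          · exact absurd hab.symm (hforall b hb).2
          · exact absurd hab (hforall a ha).2
          · exact hRg ha hb hab
    have hperel : ∀ r ∈ R, ((fE r \ {x}) ∪ (gE r \ {y})).card ≤ 2 * k - 3 := by
      intro r hr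
      have hrN' : r ∈ N' := hRsub hr
      have hrN : r ∈ N := (Finset.mem_sdiff.mp hrN').1
      have hfcard : (fE r \ {x}).card = k - 1 := by
        rw [Finset.card_sdiff_of_subset (Finset.singleton_subset_iff.mpr (hfE r hrN).2.1),
          Finset.card_singleton, hunif _ (hfE r hrN).1]
      have hgcard : (gE r \ {y}).card = k - 1 := by
        rw [Finset.card_sdiff_of_subset (Finset.singleton_subset_iff.mpr (hgE r hrN).2.1),
          Finset.card_singleton, hunif _ (hgE r hrN).1]
      have hrint : r ∈ (fE r \ {x}) ∩ (gE r \ {y}) := by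
        simp only [Finset.mem_inter, Finset.mem_sdiff, Finset.mem_singleton]
        exact ⟨⟨(hfE r hrN).2.2, (hNmem r hrN).1⟩, ⟨(hgE r hrN).2.2, (hNmem r hrN).2.1⟩⟩
      have hintpos : 1 ≤ ((fE r \ {x}) ∩ (gE r \ {y})).card :=
        Finset.card_pos.mpr ⟨r, hrint⟩
      have hsum := Finset.card_union_add_card_inter (fE r \ {x}) (gE r \ {y})
      omega
    have hN'card : N'.card ≤ R.card * (2 * k - 3) := by
      calc N'.card ≤ (R.biUnion (fun r => (fE r \ {x}) ∪ (gE r \ {y}))).card :=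
            Finset.card_le_card hcover
        _ ≤ ∑ r ∈ R, ((fE r \ {x}) ∪ (gE r \ {y})).card := Finset.card_biUnion_le
        _ ≤ ∑ _r ∈ R, (2 * k - 3) := Finset.sum_le_sum hperel
        _ = R.card * (2 * k - 3) := by rw [Finset.sum_const, smul_eq_mul]
    have hinter : (N ∩ e₀).card ≤ k - 2 := by
      have hsub2 : N ∩ e₀ ⊆ e₀ \ {x, y} := by
        intro c hc
        obtain ⟨hcN, hce₀⟩ := Finset.mem_inter.mp hc
        refine Finset.mem_sdiff.mpr ⟨hce₀, ?_⟩
        simp only [Finset.mem_insert, Finset.mem_singleton]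
        push_neg
        exact ⟨(hNmem c hcN).1, (hNmem c hcN).2.1⟩
      have hxysub : ({x, y} : Finset V) ⊆ e₀ := by
        intro z hz
        simp only [Finset.mem_insert, Finset.mem_singleton] at hz
        rcases hz with rfl | rfl <;> assumption
      have := Finset.card_le_card hsub2
      rw [Finset.card_sdiff_of_subset hxysub, hunif _ he₀,
        Finset.card_insert_of_notMem (by simpa using hxy), Finset.card_singleton] at this
      exact this
    have hsplit : N.card = (N ∩ e₀).card + N'.card := by
      rw [hN']
      exact (Finset.card_inter_add_card_sdiff N e₀).symm
    have hfinal : N.card ≤ (k - 2) + (s - 1) * (2 * k - 3) := by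
      have hR1 : R.card ≤ s - 1 := by omega
      have : R.card * (2 * k - 3) ≤ (s - 1) * (2 * k - 3) :=
        Nat.mul_le_mul_right _ hR1
      omega
    obtain ⟨k', rfl⟩ : ∃ k', k = k' + 3 := ⟨k - 3, by omega⟩
    obtain ⟨s', rfl⟩ : ∃ s', s = s' + 2 := ⟨s - 2, by omega⟩
    have e1 : s' + 2 - 1 = s' + 1 := by omega
    have e2 : 2 * (k' + 3) - 3 = 2 * k' + 3 := by omega
    have e3 : k' + 3 - 2 = k' + 1 := by omega
    rw [e1, e2, e3] at hfinal
    have h2 : N.card ≤ (k' + 1) + (s' + 1) * (2 * k' + 3) := hfinal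
    have h4 : (N.card : ℝ) ≤ ((k' : ℝ) + 1) + ((s' : ℝ) + 1) * (2 * (k' : ℝ) + 3) := by
      exact_mod_cast h2
    push_cast
    nlinarith [h4]
end

section
/- Let H be a connected linear k-uniform hypergraph (k ≥ 3) with no Berge-B_s, s ≥ 2. Then for any vertex y and any x ∈ N_y, the number of edges containing x that intersect N_y in at least two vertices satisfies Σ_{i=2}^{k} e_i^x(N_y) ≤ (2k-3)(s-1) + 1 ≤ 2(k-1)(s-1). -/
attribute [local instance] Classical.propDecidable

/-- In a connected linear `k`-uniform Berge-`B_s`-free hypergraph (`k ≥ 3`, `s ≥ 2`),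
for any vertex `y` and any `x ∈ N_y`,
`Σ_{i=2}^{k} e_i^x(N_y) ≤ (2k-3)(s-1) + 1 ≤ 2(k-1)(s-1)`, where `e_i^x(N_y)` counts
edges containing `x` and meeting `N_y` in exactly `i` vertices. -/
theorem edges_through_x_bound {V : Type*} [Fintype V] [DecidableEq V]
    (E : Finset (Finset V)) (k s : ℕ) (hk : 3 ≤ k) (hs : 2 ≤ s)
    (hunif : ∀ e ∈ E, e.card = k)
    (hlin : ∀ e ∈ E, ∀ f ∈ E, e ≠ f → (e ∩ f).card ≤ 1)
    (hconn : ∀ u v : V, Relation.ReflTransGen (fun a b => ∃ e ∈ E, a ∈ e ∧ b ∈ e) u v)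
    (hfree : BergeBookFree E s)
    (y : V) (x : V) (hx : x ∈ hNbhd E y) :
    (∑ i ∈ Finset.Icc 2 k,
        (E.filter (fun e => x ∈ e ∧ (e ∩ hNbhd E y).card = i)).card)
      ≤ (2 * k - 3) * (s - 1) + 1 ∧
    (2 * k - 3) * (s - 1) + 1 ≤ 2 * (k - 1) * (s - 1) := by
  classical
  obtain ⟨k', rfl⟩ : ∃ k', k = k' + 3 := ⟨k - 3, by omega⟩
  obtain ⟨s', rfl⟩ : ∃ s', s = s' + 2 := ⟨s - 2, by omega⟩
  set k := k' + 3 with hkdef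
  set s := s' + 2 with hsdef
  set N := hNbhd E y with hNdef
  have hx' : x ≠ y ∧ ∃ e ∈ E, y ∈ e ∧ x ∈ e := by
    simpa [hNdef, hNbhd] using hx
  obtain ⟨hxy, estar, hestarE, hyestar, hxestar⟩ := hx'.imp id id
  have hmemN : ∀ v : V, v ∈ N ↔ v ≠ y ∧ ∃ e ∈ E, y ∈ e ∧ v ∈ e := by
    intro v; simp [hNdef, hNbhd]
  -- uniqueness of an edge through two distinct vertices
  have huniq : ∀ u v : V, ∀ e ∈ E, ∀ f ∈ E, u ∈ e → u ∈ f → v ∈ e → v ∈ f → u ≠ v →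
      e = f := by
    intro u v e he f hf hue huf hve hvf huv
    by_contra hne
    have h2 : 2 ≤ (e ∩ f).card := by
      have : ({u, v} : Finset V) ⊆ e ∩ f := by
        intro w hw
        simp only [Finset.mem_insert, Finset.mem_singleton] at hw
        rcases hw with rfl | rfl <;> simp [Finset.mem_inter, *]
      calc 2 = ({u, v} : Finset V).card := (Finset.card_pair huv).symm
        _ ≤ (e ∩ f).card := Finset.card_le_card this
    exact absurd (hlin e he f hf hne) (by omega)
  set F := E.filter (fun e => x ∈ e ∧ 2 ≤ (e ∩ N).card) with hFdef
  have hmemF : ∀ e, e ∈ F ↔ e ∈ E ∧ x ∈ e ∧ 2 ≤ (e ∩ N).card := by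
    intro e; simp [hFdef]
  -- the sum equals |F|
  have hsum : (∑ i ∈ Finset.Icc 2 k,
      (E.filter (fun e => x ∈ e ∧ (e ∩ N).card = i)).card) = F.card := by
    rw [Finset.card_eq_sum_card_fiberwise
      (f := fun e => (e ∩ N).card) (t := Finset.Icc 2 k)
      (by
        intro e he
        rw [Finset.mem_coe, hmemF] at he
        have hle : (e ∩ N).card ≤ k := by
          calc (e ∩ N).card ≤ e.card := Finset.card_le_card Finset.inter_subset_left
            _ = k := hunif e he.1
        exact Finset.mem_Icc.mpr ⟨he.2.2, hle⟩)]
    apply Finset.sum_congr rfl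
    intro i hi
    have h2i : 2 ≤ i := (Finset.mem_Icc.mp hi).1
    congr 1
    ext e
    simp only [Finset.mem_filter, hmemF]
    constructor
    · rintro ⟨he, hxe, hcard⟩
      exact ⟨⟨he, hxe, by omega⟩, hcard⟩
    · rintro ⟨⟨he, hxe, _⟩, hcard⟩
      exact ⟨he, hxe, hcard⟩
  rw [hsum]
  -- second inequality, proved once and for all
  have harith : (2 * k - 3) * (s - 1) + 1 ≤ 2 * (k - 1) * (s - 1) := by
    have h1 : 2 * k - 3 = 2 * k' + 3 := by omega
    have h2 : s - 1 = s' + 1 := by omega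
    have h3 : 2 * (k - 1) = 2 * k' + 4 := by omega
    rw [h1, h2, h3]
    nlinarith
  refine ⟨?_, harith⟩
  by_contra hbig
  push_neg at hbig
  have hbig' : (2 * k - 3) * (s - 1) + 2 ≤ F.card := hbig
  -- choose companion vertex z e in each edge of F
  have hzex : ∀ e : Finset V, ∃ v, e ∈ F → v ∈ e ∧ v ∈ N ∧ v ≠ x := by
    intro e
    by_cases he : e ∈ F
    · rw [hmemF] at he
      have hne : ((e ∩ N).erase x).Nonempty := by
        rw [← Finset.card_pos]
        have := Finset.pred_card_le_card_erase (a := x) (s := e ∩ N)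
        omega
      obtain ⟨v, hv⟩ := hne
      rw [Finset.mem_erase, Finset.mem_inter] at hv
      exact ⟨v, fun _ => ⟨hv.2.1, hv.2.2, hv.1⟩⟩
    · exact ⟨x, fun h => absurd h he⟩
  choose z hz using hzex
  have hz1 : ∀ e ∈ F, z e ∈ e := fun e he => (hz e he).1
  have hz2 : ∀ e ∈ F, z e ∈ N := fun e he => (hz e he).2.1
  have hz3 : ∀ e ∈ F, z e ≠ x := fun e he => (hz e he).2.2
  have hzy : ∀ e ∈ F, z e ≠ y := by
    intro e he
    exact ((hmemN (z e)).mp (hz2 e he)).1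
  -- z is injective on F
  have hzinj : ∀ e ∈ F, ∀ e' ∈ F, z e = z e' → e = e' := by
    intro e he e' he' hzz
    rw [hmemF] at he he'
    exact huniq x (z e) e he.1 e' he'.1 he.2.1 he'.2.1 (hz1 e (by rw [hmemF]; exact he))
      (hzz ▸ hz1 e' (by rw [hmemF]; exact he')) (Ne.symm (hz3 e (by rw [hmemF]; exact he)))
  -- choose edge g e through y and z e
  have hgex : ∀ e ∈ F, ∃ h, h ∈ E ∧ y ∈ h ∧ z e ∈ h := by
    intro e he
    obtain ⟨_, h, hh, hyh, hzh⟩ := (hmemN (z e)).mp (hz2 e he)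
    exact ⟨h, hh, hyh, hzh⟩
  choose! g hg1 hg2 hg3 using hgex
  set F1 := F.filter (fun e => y ∉ e ∧ z e ∉ estar) with hF1def
  have hF1F : F1 ⊆ F := Finset.filter_subset _ _
  -- F \ F1 is small
  have hsmall : F.card ≤ F1.card + (k - 1) := by
    have hsplit := Finset.card_filter_add_card_filter_not
      (s := F) (p := fun e => y ∉ e ∧ z e ∉ estar)
    have hbad : (F.filter (fun e => ¬(y ∉ e ∧ z e ∉ estar))).card ≤ k - 1 := by
      have hsub : F.filter (fun e => ¬(y ∉ e ∧ z e ∉ estar)) ⊆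
          F.filter (fun e => y ∈ e) ∪ F.filter (fun e => z e ∈ estar) := by
        intro e he
        obtain ⟨heF, hne⟩ := Finset.mem_filter.mp he
        by_cases hy : y ∈ e
        · exact Finset.mem_union_left _ (Finset.mem_filter.mpr ⟨heF, hy⟩)
        · exact Finset.mem_union_right _ (Finset.mem_filter.mpr ⟨heF, by tauto⟩)
      have h1 : (F.filter (fun e => y ∈ e)).card ≤ 1 := by
        rw [Finset.card_le_one]
        intro a ha b hb
        rw [Finset.mem_filter, hmemF] at ha hb
        have hab : a = estar := huniq x y a ha.1.1 estar hestarE ha.1.2.1 hxestar ha.2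
          hyestar hxy
        have hbb : b = estar := huniq x y b hb.1.1 estar hestarE hb.1.2.1 hxestar hb.2
          hyestar hxy
        rw [hab, hbb]
      have h2 : (F.filter (fun e => z e ∈ estar)).card ≤ k - 2 := by
        have : (F.filter (fun e => z e ∈ estar)).card ≤ ((estar.erase x).erase y).card := by
          apply Finset.card_le_card_of_injOn z
          · intro e he
            rw [Finset.mem_coe, Finset.mem_filter] at he
            rw [Finset.mem_coe, Finset.mem_erase, Finset.mem_erase]
            exact ⟨hzy e he.1, hz3 e he.1, he.2⟩
          · intro a ha b hb hab
            simp only [Finset.coe_filter, Set.mem_setOf_eq] at ha hb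
            exact hzinj a ha.1 b hb.1 hab
        have hcx : ((estar.erase x).erase y).card = k - 2 := by
          rw [Finset.card_erase_of_mem (Finset.mem_erase.mpr ⟨Ne.symm hxy, hyestar⟩),
            Finset.card_erase_of_mem hxestar, hunif estar hestarE]
          omega
        omega
      calc (F.filter (fun e => ¬(y ∉ e ∧ z e ∉ estar))).card
          ≤ (F.filter (fun e => y ∈ e) ∪ F.filter (fun e => z e ∈ estar)).card :=
            Finset.card_le_card hsub
        _ ≤ (F.filter (fun e => y ∈ e)).card + (F.filter (fun e => z e ∈ estar)).card :=
            Finset.card_union_le _ _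
        _ ≤ 1 + (k - 2) := Nat.add_le_add h1 h2
        _ = k - 1 := by omega
    have hF1card : (F.filter (fun e => y ∉ e ∧ z e ∉ estar)).card = F1.card := by
      rw [hF1def]
    omega
  have hF1big : (k - 1) * (s - 1) + 1 ≤ F1.card := by
    have h1 : 2 * k - 3 = 2 * k' + 3 := by omega
    have h2 : s - 1 = s' + 1 := by omega
    have h3 : k - 1 = k' + 2 := by omega
    rw [h2, h3]
    rw [h1, h2] at hbig'
    nlinarith [hbig', hsmall, h3]
  -- fibers of g on F1 have size ≤ k - 1
  have hfib : ∀ h ∈ F1.image g, (F1.filter (fun e => g e = h)).card ≤ k - 1 := by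
    intro h hh
    obtain ⟨e0, he0, rfl⟩ := Finset.mem_image.mp hh
    have he0F : e0 ∈ F := hF1F he0
    have : (F1.filter (fun e => g e = g e0)).card ≤ ((g e0).erase y).card := by
      apply Finset.card_le_card_of_injOn z
      · intro e he
        rw [Finset.mem_coe, Finset.mem_filter] at he
        have heF : e ∈ F := hF1F he.1
        rw [Finset.mem_coe, Finset.mem_erase]
        exact ⟨hzy e heF, he.2 ▸ hg3 e heF⟩
      · intro a ha b hb hab
        simp only [Finset.coe_filter, Set.mem_setOf_eq] at ha hb
        exact hzinj a (hF1F ha.1) b (hF1F hb.1) hab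
    have hcy : ((g e0).erase y).card = k - 1 := by
      rw [Finset.card_erase_of_mem (hg2 e0 he0F), hunif _ (hg1 e0 he0F)]
    omega
  have himg : s ≤ (F1.image g).card := by
    by_contra hlt
    push_neg at hlt
    have h1 : F1.card ≤ (k - 1) * (F1.image g).card :=
      Finset.card_le_mul_card_image F1 (k - 1) hfib
    have h2 : (k - 1) * (F1.image g).card ≤ (k - 1) * (s - 1) :=
      Nat.mul_le_mul_left _ (by omega)
    omega
  obtain ⟨S, hSsub, hScard⟩ := Finset.exists_subset_card_eq himg
  -- representatives
  have hrex : ∀ h ∈ S, ∃ e ∈ F1, g e = h := by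
    intro h hh
    obtain ⟨e, he, hge⟩ := Finset.mem_image.mp (hSsub hh)
    exact ⟨e, he, hge⟩
  choose! r hr1 hr2 using hrex
  have hEquiv := Finset.equivFinOfCardEq hScard
  set ψ : Fin s → Finset V := fun i => (hEquiv.symm i : Finset V) with hψdef
  have hψS : ∀ i, ψ i ∈ S := fun i => (hEquiv.symm i).2
  have hψinj : Function.Injective ψ := by
    intro i j hij
    have : hEquiv.symm i = hEquiv.symm j := Subtype.ext hij
    exact hEquiv.symm.injective this
  have hrF1 : ∀ i, r (ψ i) ∈ F1 := fun i => hr1 _ (hψS i)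
  have hrF : ∀ i, r (ψ i) ∈ F := fun i => hF1F (hrF1 i)
  have hgr : ∀ i, g (r (ψ i)) = ψ i := fun i => hr2 _ (hψS i)
  have hrinj : Function.Injective (fun i => r (ψ i)) := by
    intro i j hij
    apply hψinj
    rw [← hgr i, ← hgr j]
    simp only at hij
    rw [hij]
  have hyNotIn : ∀ i, y ∉ r (ψ i) := by
    intro i
    have := (Finset.mem_filter.mp (hrF1 i)).2
    exact this.1
  have hzNotStar : ∀ i, z (r (ψ i)) ∉ estar := by
    intro i
    have := (Finset.mem_filter.mp (hrF1 i)).2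
    exact this.2
  -- build the Berge book
  apply hfree
  refine ⟨x, y, fun i => z (r (ψ i)), estar, fun i => r (ψ i), fun i => ψ i,
    hxy, ?_, ?_, hestarE, hxestar, hyestar, ?_, ?_, hrinj, hψinj, ?_, ?_⟩
  · -- c injective
    intro i j hij
    simp only at hij
    exact hrinj (hzinj _ (hrF i) _ (hrF j) hij)
  · intro i
    exact ⟨hz3 _ (hrF i), hzy _ (hrF i)⟩
  · intro i
    have heF := hrF i
    rw [hmemF] at heF
    exact ⟨heF.1, heF.2.1, hz1 _ (hrF i)⟩
  · intro i
    refine ⟨?_, ?_, ?_⟩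
    · show ψ i ∈ E; rw [← hgr i]; exact hg1 _ (hrF i)
    · show y ∈ ψ i; rw [← hgr i]; exact hg2 _ (hrF i)
    · show z (r (ψ i)) ∈ ψ i
      have h3 := hg3 _ (hrF i)
      rw [hgr i] at h3
      exact h3
  · -- f i ≠ g j
    intro i j hfg
    simp only at hfg
    apply hyNotIn i
    rw [hfg, ← hgr j]
    exact hg2 _ (hrF j)
  · intro i
    constructor
    · intro heq
      simp only at heq
      exact hyNotIn i (heq ▸ hyestar)
    · intro heq
      simp only at heq
      apply hzNotStar i
      rw [heq]
      have h3 := hg3 _ (hrF i)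
      rw [hgr i] at h3
      exact h3
end

section
/- Let H be a linear k-uniform hypergraph with no Berge-B_s (s ≥ 2, k ≥ 3), and let e = {u, i_2, ..., i_k} be an edge containing u. For v ∈ N_u set S_v = {w ∉ N_u ∪ {u} : w lies in some edge f with |f ∩ N_u| = 1 and v ∈ f}. Then |∪_{j=2}^{k} S_{i_j}| ≥ Σ_{j=2}^{k} |S_{i_j}| − C(k-1,2)·(2k-3)(s-1). -/
attribute [local instance] Classical.propDecidable

/-- For `v ∈ N_u`, `S_v` is the set of vertices outside `N_u ∪ {u}` lying in some
edge `f` with `|f ∩ N_u| = 1` and `v ∈ f`. -/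
def sSet {V : Type*} [Fintype V] [DecidableEq V] (E : Finset (Finset V)) (u v : V) :
    Finset V :=
  Finset.univ.filter (fun w => w ∉ hNbhd E u ∧ w ≠ u ∧
    ∃ f ∈ E, (f ∩ hNbhd E u).card = 1 ∧ v ∈ f ∧ w ∈ f)


lemma greedy_select {V α β : Type*} [DecidableEq V] [DecidableEq α] [DecidableEq β]
    (F : V → α) (G : V → β) (m : ℕ) :
    ∀ (n : ℕ) (T : Finset V),
      (∀ w ∈ T, (T.filter (fun x => F x = F w)).card ≤ m) →
      (∀ w ∈ T, (T.filter (fun x => G x = G w)).card ≤ m) →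
      (2 * m - 1) * n < T.card + (2 * m - 1) →
      ∃ c : Fin n → V, (∀ i, c i ∈ T) ∧
        Function.Injective (fun i => F (c i)) ∧
        Function.Injective (fun i => G (c i)) := by
  intro n
  induction n with
  | zero =>
    intro T _ _ _
    exact ⟨fun i => i.elim0, fun i => i.elim0, fun i => i.elim0, fun i => i.elim0⟩
  | succ n ih =>
    intro T hF hG hcard
    have hTpos : (2 * m - 1) * n < T.card := by
      have h1 : (2 * m - 1) * (n + 1) = (2 * m - 1) * n + (2 * m - 1) := by ring
      omega
    obtain ⟨w₀, hw₀⟩ := Finset.card_pos.mp (lt_of_le_of_lt (Nat.zero_le _) hTpos)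
    set A := T.filter (fun x => F x = F w₀) with hA
    set B := T.filter (fun x => G x = G w₀) with hB
    have hw₀A : w₀ ∈ A := Finset.mem_filter.mpr ⟨hw₀, rfl⟩
    have hw₀B : w₀ ∈ B := Finset.mem_filter.mpr ⟨hw₀, rfl⟩
    have hABcard : (A ∪ B).card ≤ 2 * m - 1 := by
      have h1 := Finset.card_union_add_card_inter A B
      have h2 : 1 ≤ (A ∩ B).card :=
        Finset.card_pos.mpr ⟨w₀, Finset.mem_inter.mpr ⟨hw₀A, hw₀B⟩⟩
      have h3 := hF w₀ hw₀
      have h4 := hG w₀ hw₀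
      rw [← hA] at h3
      rw [← hB] at h4
      omega
    set T' := T \ (A ∪ B) with hT'
    have hsub : A ∪ B ⊆ T := by
      intro x hx
      rcases Finset.mem_union.mp hx with h | h
      · exact (Finset.mem_filter.mp h).1
      · exact (Finset.mem_filter.mp h).1
    have hT'card : T'.card = T.card - (A ∪ B).card := Finset.card_sdiff_of_subset hsub
    have hT'sub : T' ⊆ T := Finset.sdiff_subset
    have hcard' : (2 * m - 1) * n < T'.card + (2 * m - 1) := by omega
    obtain ⟨c', hc'T, hc'F, hc'G⟩ := ih T'
      (fun w hw => le_trans (Finset.card_le_card (fun x hx => by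
        have := Finset.mem_filter.mp hx
        exact Finset.mem_filter.mpr ⟨hT'sub this.1, this.2⟩)) (hF w (hT'sub hw)))
      (fun w hw => le_trans (Finset.card_le_card (fun x hx => by
        have := Finset.mem_filter.mp hx
        exact Finset.mem_filter.mpr ⟨hT'sub this.1, this.2⟩)) (hG w (hT'sub hw)))
      hcard'
    have hc'F' : ∀ i, F (c' i) ≠ F w₀ := by
      intro i h
      have : c' i ∈ A ∪ B := Finset.mem_union_left _ (Finset.mem_filter.mpr ⟨hT'sub (hc'T i), h⟩)
      exact (Finset.mem_sdiff.mp (hc'T i)).2 this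
    have hc'G' : ∀ i, G (c' i) ≠ G w₀ := by
      intro i h
      have : c' i ∈ A ∪ B := Finset.mem_union_right _ (Finset.mem_filter.mpr ⟨hT'sub (hc'T i), h⟩)
      exact (Finset.mem_sdiff.mp (hc'T i)).2 this
    refine ⟨Fin.cases w₀ c', ?_, ?_, ?_⟩
    · intro i
      induction i using Fin.cases with
      | zero => simpa using hw₀
      | succ i => simpa using hT'sub (hc'T i)
    · intro i j h
      induction i using Fin.cases with
      | zero =>
        induction j using Fin.cases with
        | zero => rfl
        | succ j => simp at h; exact absurd h.symm (hc'F' j)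
      | succ i =>
        induction j using Fin.cases with
        | zero => simp at h; exact absurd h (hc'F' i)
        | succ j => simp at h; exact congrArg Fin.succ (hc'F h)
    · intro i j h
      induction i using Fin.cases with
      | zero =>
        induction j using Fin.cases with
        | zero => rfl
        | succ j => simp at h; exact absurd h.symm (hc'G' j)
      | succ i =>
        induction j using Fin.cases with
        | zero => simp at h; exact absurd h (hc'G' i)
        | succ j => simp at h; exact congrArg Fin.succ (hc'G h)

lemma sum_card_le_union {V : Type*} [DecidableEq V] (S : V → Finset V) (M : ℕ) :
    ∀ T : Finset V, (∀ v ∈ T, ∀ w ∈ T, v ≠ w → (S v ∩ S w).card ≤ M) →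
      ∑ v ∈ T, (S v).card ≤ (T.biUnion S).card + T.card.choose 2 * M := by
  intro T
  induction T using Finset.induction_on with
  | empty => simp
  | @insert a T ha ih =>
    intro hM
    rw [Finset.sum_insert ha, Finset.biUnion_insert]
    have hIH := ih (fun v hv w hw hvw => hM v (Finset.mem_insert_of_mem hv) w
      (Finset.mem_insert_of_mem hw) hvw)
    have hU := Finset.card_union_add_card_inter (S a) (T.biUnion S)
    have hInter : S a ∩ T.biUnion S = T.biUnion (fun w => S a ∩ S w) := by
      ext x
      simp only [Finset.mem_inter, Finset.mem_biUnion]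
      tauto
    have hIle : (S a ∩ T.biUnion S).card ≤ T.card * M := by
      rw [hInter]
      refine le_trans (Finset.card_biUnion_le) ?_
      calc ∑ w ∈ T, (S a ∩ S w).card ≤ ∑ _w ∈ T, M := by
            refine Finset.sum_le_sum ?_
            intro w hw
            exact hM a (Finset.mem_insert_self a T) w (Finset.mem_insert_of_mem hw)
              (fun h => ha (h ▸ hw))
        _ = T.card * M := by rw [Finset.sum_const, smul_eq_mul]
    have hchoose : (insert a T).card.choose 2 = T.card.choose 2 + T.card := by
      rw [Finset.card_insert_of_notMem ha]
      have := Nat.choose_succ_succ T.card 1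
      simp [Nat.choose_one_right] at this
      omega
    rw [hchoose]
    have h2 : T.card.choose 2 * M + T.card * M = (T.card.choose 2 + T.card) * M := by ring
    omega

lemma inter_sSet_bound {V : Type*} [Fintype V] [DecidableEq V]
    (E : Finset (Finset V)) (k s : ℕ) (hk : 3 ≤ k) (hs : 2 ≤ s)
    (hunif : ∀ e ∈ E, e.card = k)
    (hfree : BergeBookFree E s)
    (u : V) (e : Finset V) (he : e ∈ E) (hue : u ∈ e)
    (v w : V) (hv : v ∈ e.erase u) (hw : w ∈ e.erase u) (hvw : v ≠ w) :
    (sSet E u v ∩ sSet E u w).card ≤ (2 * k - 3) * (s - 1) := by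
  by_contra hcon
  push_neg at hcon
  set N := hNbhd E u with hN
  have hvN : v ∈ N := by
    rw [hN, hNbhd]
    exact Finset.mem_filter.mpr ⟨Finset.mem_univ _,
      (Finset.mem_erase.mp hv).1, e, he, hue, (Finset.mem_erase.mp hv).2⟩
  have hwN : w ∈ N := by
    rw [hN, hNbhd]
    exact Finset.mem_filter.mpr ⟨Finset.mem_univ _,
      (Finset.mem_erase.mp hw).1, e, he, hue, (Finset.mem_erase.mp hw).2⟩
  set T := sSet E u v ∩ sSet E u w with hT
  -- choice functions
  have hFex : ∀ x ∈ T, ∃ f ∈ E, (f ∩ N).card = 1 ∧ v ∈ f ∧ x ∈ f := by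
    intro x hx
    have := Finset.mem_filter.mp (Finset.mem_inter.mp hx).1
    exact this.2.2.2
  have hGex : ∀ x ∈ T, ∃ f ∈ E, (f ∩ N).card = 1 ∧ w ∈ f ∧ x ∈ f := by
    intro x hx
    have := Finset.mem_filter.mp (Finset.mem_inter.mp hx).2
    exact this.2.2.2
  have hxN : ∀ x ∈ T, x ∉ N ∧ x ≠ u := by
    intro x hx
    have := Finset.mem_filter.mp (Finset.mem_inter.mp hx).1
    exact ⟨this.2.1, this.2.2.1⟩
  classical
  set F : V → Finset V := fun x =>
    if h : ∃ f ∈ E, (f ∩ N).card = 1 ∧ v ∈ f ∧ x ∈ f then h.choose else ∅ with hFdef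
  set G : V → Finset V := fun x =>
    if h : ∃ f ∈ E, (f ∩ N).card = 1 ∧ w ∈ f ∧ x ∈ f then h.choose else ∅ with hGdef
  have hFspec : ∀ x ∈ T, F x ∈ E ∧ (F x ∩ N).card = 1 ∧ v ∈ F x ∧ x ∈ F x := by
    intro x hx
    have h := hFex x hx
    rw [hFdef]
    simp only [dif_pos h]
    exact h.choose_spec
  have hGspec : ∀ x ∈ T, G x ∈ E ∧ (G x ∩ N).card = 1 ∧ w ∈ G x ∧ x ∈ G x := by
    intro x hx
    have h := hGex x hx
    rw [hGdef]
    simp only [dif_pos h]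
    exact h.choose_spec
  -- fiber bounds
  have hFfib : ∀ x ∈ T, (T.filter (fun y => F y = F x)).card ≤ k - 1 := by
    intro x hx
    have hsub : T.filter (fun y => F y = F x) ⊆ (F x).erase v := by
      intro y hy
      obtain ⟨hyT, hyF⟩ := Finset.mem_filter.mp hy
      refine Finset.mem_erase.mpr ⟨?_, hyF ▸ (hFspec y hyT).2.2.2⟩
      intro hyv
      exact (hxN y hyT).1 (hyv ▸ hvN)
    calc (T.filter (fun y => F y = F x)).card ≤ ((F x).erase v).card :=
          Finset.card_le_card hsub
      _ ≤ k - 1 := by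
          rw [Finset.card_erase_of_mem (hFspec x hx).2.2.1, hunif _ (hFspec x hx).1]
  have hGfib : ∀ x ∈ T, (T.filter (fun y => G y = G x)).card ≤ k - 1 := by
    intro x hx
    have hsub : T.filter (fun y => G y = G x) ⊆ (G x).erase w := by
      intro y hy
      obtain ⟨hyT, hyG⟩ := Finset.mem_filter.mp hy
      refine Finset.mem_erase.mpr ⟨?_, hyG ▸ (hGspec y hyT).2.2.2⟩
      intro hyw
      exact (hxN y hyT).1 (hyw ▸ hwN)
    calc (T.filter (fun y => G y = G x)).card ≤ ((G x).erase w).card :=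
          Finset.card_le_card hsub
      _ ≤ k - 1 := by
          rw [Finset.card_erase_of_mem (hGspec x hx).2.2.1, hunif _ (hGspec x hx).1]
  have hm : 2 * (k - 1) - 1 = 2 * k - 3 := by omega
  have hcard : (2 * (k - 1) - 1) * s < T.card + (2 * (k - 1) - 1) := by
    rw [hm]
    have h2 : (2 * k - 3) * s = (2 * k - 3) * (s - 1) + (2 * k - 3) * 1 := by
      rw [← Nat.mul_add]; congr 1; omega
    omega
  obtain ⟨c, hcT, hcF, hcG⟩ := greedy_select F G (k - 1) s T hFfib hGfib hcard
  -- build the forbidden Berge book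
  apply hfree
  refine ⟨v, w, c, e, fun i => F (c i), fun i => G (c i), hvw, ?_, ?_, he,
    (Finset.mem_erase.mp hv).2, (Finset.mem_erase.mp hw).2, ?_, ?_, hcF, hcG, ?_, ?_⟩
  · intro i j h
    exact hcF (congrArg F h)
  · intro i
    constructor
    · intro h; exact (hxN _ (hcT i)).1 (h ▸ hvN)
    · intro h; exact (hxN _ (hcT i)).1 (h ▸ hwN)
  · intro i
    exact ⟨(hFspec _ (hcT i)).1, (hFspec _ (hcT i)).2.2.1, (hFspec _ (hcT i)).2.2.2⟩
  · intro i
    exact ⟨(hGspec _ (hcT i)).1, (hGspec _ (hcT i)).2.2.1, (hGspec _ (hcT i)).2.2.2⟩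
  · -- f i ≠ g j
    intro i j h
    have h' : F (c i) = G (c j) := h
    have h1 : v ∈ F (c i) ∩ N := Finset.mem_inter.mpr ⟨(hFspec _ (hcT i)).2.2.1, hvN⟩
    have h2 : w ∈ F (c i) ∩ N := by
      rw [h']; exact Finset.mem_inter.mpr ⟨(hGspec _ (hcT j)).2.2.1, hwN⟩
    have h3 : 1 < (F (c i) ∩ N).card :=
      Finset.one_lt_card.mpr ⟨v, h1, w, h2, hvw⟩
    have h4 := (hFspec _ (hcT i)).2.1
    omega
  · intro i
    constructor
    · intro h
      have h' : e = F (c i) := h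
      have h1 : v ∈ F (c i) ∩ N := Finset.mem_inter.mpr ⟨(hFspec _ (hcT i)).2.2.1, hvN⟩
      have h2 : w ∈ F (c i) ∩ N := by
        rw [← h']; exact Finset.mem_inter.mpr ⟨(Finset.mem_erase.mp hw).2, hwN⟩
      have h3 : 1 < (F (c i) ∩ N).card := Finset.one_lt_card.mpr ⟨v, h1, w, h2, hvw⟩
      have h4 := (hFspec _ (hcT i)).2.1
      omega
    · intro h
      have h' : e = G (c i) := h
      have h1 : w ∈ G (c i) ∩ N := Finset.mem_inter.mpr ⟨(hGspec _ (hcT i)).2.2.1, hwN⟩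
      have h2 : v ∈ G (c i) ∩ N := by
        rw [← h']; exact Finset.mem_inter.mpr ⟨(Finset.mem_erase.mp hv).2, hvN⟩
      have h3 : 1 < (G (c i) ∩ N).card := Finset.one_lt_card.mpr ⟨v, h2, w, h1, hvw⟩
      have h4 := (hGspec _ (hcT i)).2.1
      omega

/-- In a linear `k`-uniform Berge-`B_s`-free hypergraph, for an edge
`e = {u, i_2, …, i_k}` through `u`,
`|∪_{j=2}^{k} S_{i_j}| ≥ Σ_{j=2}^{k} |S_{i_j}| − C(k-1,2)·(2k-3)(s-1)`. -/
theorem union_sSet_bound {V : Type*} [Fintype V] [DecidableEq V]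
    (E : Finset (Finset V)) (k s : ℕ) (hk : 3 ≤ k) (hs : 2 ≤ s)
    (hunif : ∀ e ∈ E, e.card = k)
    (hlin : ∀ e ∈ E, ∀ f ∈ E, e ≠ f → (e ∩ f).card ≤ 1)
    (hfree : BergeBookFree E s)
    (u : V) (e : Finset V) (he : e ∈ E) (hue : u ∈ e) :
    (∑ v ∈ e.erase u, ((sSet E u v).card : ℝ))
        - ((k - 1).choose 2 : ℝ) * ((2 * (k : ℝ) - 3) * ((s : ℝ) - 1))
      ≤ (((e.erase u).biUnion (fun v => sSet E u v)).card : ℝ) := by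
  have hcardT : (e.erase u).card = k - 1 := by
    rw [Finset.card_erase_of_mem hue, hunif e he]
  have hnat := sum_card_le_union (fun v => sSet E u v) ((2 * k - 3) * (s - 1)) (e.erase u)
    (fun v hv w hw hvw => inter_sSet_bound E k s hk hs hunif hfree u e he hue v w hv hw hvw)
  rw [hcardT] at hnat
  have hcast := (Nat.cast_le (α := ℝ)).mpr hnat
  have c1 : ((2 * k - 3 : ℕ) : ℝ) = 2 * (k : ℝ) - 3 := by
    have h3 : (3 : ℕ) ≤ 2 * k := by omega
    rw [Nat.cast_sub h3]; push_cast; ring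
  have c2 : ((s - 1 : ℕ) : ℝ) = (s : ℝ) - 1 := by
    have h1 : (1 : ℕ) ≤ s := by omega
    rw [Nat.cast_sub h1]; push_cast; ring
  rw [Nat.cast_add, Nat.cast_mul, Nat.cast_mul, Nat.cast_sum, c1, c2] at hcast
  linarith
end

section
/- Let H be a connected linear k-uniform hypergraph on n vertices with no Berge-K_{2,t} (t ≥ 1). Fix a vertex u with degree d_u; denote by l_1,...,l_{d_u} the edges through u, B_u = V(H) \ (N_u ∪ {u}), and for each i let V_i ⊆ B_u be the set of vertices w ∈ B_u lying in some edge f with |f ∩ N_u| = 1 and f ∩ (l_i \ {u}) ≠ ∅. Then Σ_{i=1}^{d_u} |V_i| ≤ (t-1)(n - (k-1)d_u - 1). -/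
attribute [local instance] Classical.propDecidable

/-- `H` contains no Berge-`K_{2,t}`: there do not exist distinct vertices
`a, b, c_1, …, c_t` and `2t` distinct hyperedges `f i ⊇ {a, c i}`,
`g i ⊇ {b, c i}`. -/
def BergeK2tFree {V : Type*} (E : Finset (Finset V)) (t : ℕ) : Prop :=
  ¬ ∃ (a b : V) (c : Fin t → V) (f g : Fin t → Finset V),
      a ≠ b ∧ Function.Injective c ∧ (∀ i, c i ≠ a ∧ c i ≠ b) ∧
      (∀ i, f i ∈ E ∧ a ∈ f i ∧ c i ∈ f i) ∧
      (∀ i, g i ∈ E ∧ b ∈ g i ∧ c i ∈ g i) ∧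
      Function.Injective f ∧ Function.Injective g ∧
      (∀ i j, f i ≠ g j)

lemma key_count {V : Type*} [Fintype V] [DecidableEq V]
    (E : Finset (Finset V)) (t : ℕ)
    (hlin : ∀ e ∈ E, ∀ f ∈ E, e ≠ f → (e ∩ f).card ≤ 1)
    (hfree : BergeK2tFree E t) (u w : V) (hwN : w ∉ hNbhd E u) (hwu : w ≠ u) :
    ((E.filter (fun e => u ∈ e)).filter (fun l => ∃ f ∈ E,
        (f ∩ hNbhd E u).card = 1 ∧ w ∈ f ∧ (f ∩ l.erase u).Nonempty)).card ≤ t - 1 := by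
  by_contra hcon
  push_neg at hcon
  set S := ((E.filter (fun e => u ∈ e)).filter (fun l => ∃ f ∈ E,
        (f ∩ hNbhd E u).card = 1 ∧ w ∈ f ∧ (f ∩ l.erase u).Nonempty)) with hS
  have hts : t ≤ S.card := by omega
  obtain ⟨T, hTsub, hTcard⟩ := Finset.exists_subset_card_eq hts
  set φ : Fin t → Finset V := fun i => (T.equivFin.symm (Fin.cast hTcard.symm i) : Finset V) with hφ
  have hφmem : ∀ i, φ i ∈ T := fun i => (T.equivFin.symm (Fin.cast hTcard.symm i)).2
  have hφinj : Function.Injective φ := by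
    intro i j h
    have h2 := T.equivFin.symm.injective (Subtype.ext h)
    have h3 := congrArg Fin.val h2
    exact Fin.ext (by simpa using h3)
  have hφS : ∀ i, φ i ∈ S := fun i => hTsub (hφmem i)
  have hφE : ∀ i, φ i ∈ E := fun i =>
    (Finset.mem_filter.mp ((Finset.mem_filter.mp (hφS i)).1)).1
  have hφu : ∀ i, u ∈ φ i := fun i =>
    (Finset.mem_filter.mp ((Finset.mem_filter.mp (hφS i)).1)).2
  have hP : ∀ i, ∃ f ∈ E, (f ∩ hNbhd E u).card = 1 ∧ w ∈ f ∧ (f ∩ (φ i).erase u).Nonempty :=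
    fun i => (Finset.mem_filter.mp (hφS i)).2
  choose F hFE hFcard hwF hne using hP
  choose c hc using hne
  have hcF : ∀ i, c i ∈ F i := fun i => (Finset.mem_inter.mp (hc i)).1
  have hcφe : ∀ i, c i ∈ (φ i).erase u := fun i => (Finset.mem_inter.mp (hc i)).2
  have hcu : ∀ i, c i ≠ u := fun i => (Finset.mem_erase.mp (hcφe i)).1
  have hcl : ∀ i, c i ∈ φ i := fun i => (Finset.mem_erase.mp (hcφe i)).2
  have hcN : ∀ i, c i ∈ hNbhd E u := by
    intro i
    simp only [hNbhd, Finset.mem_filter, Finset.mem_univ, true_and]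
    exact ⟨hcu i, φ i, hφE i, hφu i, hcl i⟩
  have hcinj : Function.Injective c := by
    intro i j hij
    by_contra hne'
    have hφne : φ i ≠ φ j := fun h => hne' (hφinj h)
    have h2 := hlin (φ i) (hφE i) (φ j) (hφE j) hφne
    have h3 : 1 < ((φ i) ∩ (φ j)).card :=
      Finset.one_lt_card.mpr ⟨u, Finset.mem_inter.mpr ⟨hφu i, hφu j⟩,
        c i, Finset.mem_inter.mpr ⟨hcl i, hij ▸ hcl j⟩, (hcu i).symm⟩
    omega
  have hc_eq : ∀ i j, F i = F j → c i = c j := by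
    intro i j h
    obtain ⟨x, hx⟩ := Finset.card_eq_one.mp (hFcard i)
    have h1 : c i ∈ F i ∩ hNbhd E u := Finset.mem_inter.mpr ⟨hcF i, hcN i⟩
    have h2 : c j ∈ F i ∩ hNbhd E u := Finset.mem_inter.mpr ⟨h ▸ hcF j, hcN j⟩
    rw [hx, Finset.mem_singleton] at h1 h2
    rw [h1, h2]
  refine hfree ⟨u, w, c, φ, F, Ne.symm hwu, hcinj,
    fun i => ⟨hcu i, fun h => hwN (h ▸ hcN i)⟩,
    fun i => ⟨hφE i, hφu i, hcl i⟩,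
    fun i => ⟨hFE i, hwF i, hcF i⟩,
    hφinj, fun i j h => hcinj (hc_eq i j h), ?_⟩
  intro i j h
  apply hwN
  simp only [hNbhd, Finset.mem_filter, Finset.mem_univ, true_and]
  exact ⟨hwu, F j, hFE j, h ▸ hφu i, hwF j⟩

lemma nbhd_card {V : Type*} [Fintype V] [DecidableEq V]
    (E : Finset (Finset V)) (k : ℕ)
    (hunif : ∀ e ∈ E, e.card = k)
    (hlin : ∀ e ∈ E, ∀ f ∈ E, e ≠ f → (e ∩ f).card ≤ 1) (u : V) :
    (hNbhd E u).card = (k - 1) * hDeg E u := by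
  have hN : hNbhd E u = (E.filter (fun e => u ∈ e)).biUnion (fun l => l.erase u) := by
    ext w
    simp only [hNbhd, Finset.mem_filter, Finset.mem_univ, true_and, Finset.mem_biUnion,
      Finset.mem_erase]
    constructor
    · rintro ⟨hw, e, he, hue, hwe⟩; exact ⟨e, ⟨he, hue⟩, hw, hwe⟩
    · rintro ⟨e, ⟨he, hue⟩, hw, hwe⟩; exact ⟨hw, e, he, hue, hwe⟩
  rw [hN, Finset.card_biUnion]
  · rw [hDeg, Finset.sum_congr rfl (fun l hl => ?_), Finset.sum_const, smul_eq_mul, mul_comm]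
    have hl' := Finset.mem_filter.mp hl
    rw [Finset.card_erase_of_mem hl'.2, hunif l hl'.1]
  · intro l1 h1 l2 h2 hne
    have h1' := Finset.mem_filter.mp h1
    have h2' := Finset.mem_filter.mp h2
    rw [Function.onFun, Finset.disjoint_left]
    intro w hw1 hw2
    have hw1' := Finset.mem_erase.mp hw1
    have hw2' := Finset.mem_erase.mp hw2
    have := hlin l1 h1'.1 l2 h2'.1 hne
    have : 1 < (l1 ∩ l2).card :=
      Finset.one_lt_card.mpr ⟨u, Finset.mem_inter.mpr ⟨h1'.2, h2'.2⟩,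
        w, Finset.mem_inter.mpr ⟨hw1'.2, hw2'.2⟩, (hw1'.1).symm⟩
    omega

/-- Claim 4.4: in a connected linear `k`-uniform Berge-`K_{2,t}`-free hypergraph on
`n` vertices, with `l_1, …, l_{d_u}` the edges through `u` and `V_i ⊆ B_u` the set of
vertices of `B_u = V ∖ (N_u ∪ {u})` lying in an edge `f` with `|f ∩ N_u| = 1` and
`f ∩ (l_i ∖ {u}) ≠ ∅`, we have `Σ_i |V_i| ≤ (t-1)(n - (k-1)d_u - 1)`. -/
theorem sum_Vi_bound {V : Type*} [Fintype V] [DecidableEq V]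
    (E : Finset (Finset V)) (k t : ℕ) (hk : 3 ≤ k) (ht : 1 ≤ t)
    (hunif : ∀ e ∈ E, e.card = k)
    (hlin : ∀ e ∈ E, ∀ f ∈ E, e ≠ f → (e ∩ f).card ≤ 1)
    (hconn : ∀ u v : V, Relation.ReflTransGen (fun a b => ∃ e ∈ E, a ∈ e ∧ b ∈ e) u v)
    (hfree : BergeK2tFree E t) (u : V) :
    (∑ l ∈ E.filter (fun e => u ∈ e),
        ((Finset.univ.filter (fun w => w ∉ hNbhd E u ∧ w ≠ u ∧
            ∃ f ∈ E, (f ∩ hNbhd E u).card = 1 ∧ w ∈ f ∧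
              (f ∩ (l.erase u)).Nonempty)).card : ℝ))
      ≤ ((t : ℝ) - 1) * ((Fintype.card V : ℝ) - ((k : ℝ) - 1) * (hDeg E u : ℝ) - 1) := by
  set N := hNbhd E u with hNdef
  set D := E.filter (fun e => u ∈ e) with hDdef
  set B := Finset.univ.filter (fun w : V => w ∉ N ∧ w ≠ u) with hBdef
  have huN : u ∉ N := by
    simp [hNdef, hNbhd]
  have hBcompl : B = (insert u N)ᶜ := by
    ext w
    simp only [hBdef, Finset.mem_filter, Finset.mem_univ, true_and, Finset.mem_compl,
      Finset.mem_insert]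
    tauto
  have hBcard : B.card = Fintype.card V - ((k - 1) * hDeg E u + 1) := by
    rw [hBcompl, Finset.card_compl, Finset.card_insert_of_notMem huN,
      nbhd_card E k hunif hlin u]
  have hle : (k - 1) * hDeg E u + 1 ≤ Fintype.card V := by
    have := Finset.card_le_univ (insert u N)
    rwa [Finset.card_insert_of_notMem huN, nbhd_card E k hunif hlin u] at this
  have hnat : (∑ l ∈ D, (Finset.univ.filter (fun w : V => w ∉ N ∧ w ≠ u ∧
      ∃ f ∈ E, (f ∩ N).card = 1 ∧ w ∈ f ∧ (f ∩ (l.erase u)).Nonempty)).card)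
      ≤ (t - 1) * B.card := by
    calc ∑ l ∈ D, (Finset.univ.filter (fun w : V => w ∉ N ∧ w ≠ u ∧
          ∃ f ∈ E, (f ∩ N).card = 1 ∧ w ∈ f ∧ (f ∩ (l.erase u)).Nonempty)).card
        = ∑ l ∈ D, ∑ w ∈ Finset.univ, (if w ∉ N ∧ w ≠ u ∧
            ∃ f ∈ E, (f ∩ N).card = 1 ∧ w ∈ f ∧ (f ∩ (l.erase u)).Nonempty then 1 else 0) := by
          refine Finset.sum_congr rfl fun l _ => ?_
          rw [Finset.card_filter]
      _ = ∑ w ∈ Finset.univ, ∑ l ∈ D, (if w ∉ N ∧ w ≠ u ∧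
            ∃ f ∈ E, (f ∩ N).card = 1 ∧ w ∈ f ∧ (f ∩ (l.erase u)).Nonempty then 1 else 0) :=
          Finset.sum_comm
      _ ≤ ∑ w ∈ Finset.univ, (if w ∉ N ∧ w ≠ u then t - 1 else 0) := by
          apply Finset.sum_le_sum
          intro w _
          by_cases hw : w ∉ N ∧ w ≠ u
          · rw [if_pos hw]
            calc ∑ l ∈ D, (if w ∉ N ∧ w ≠ u ∧
                  ∃ f ∈ E, (f ∩ N).card = 1 ∧ w ∈ f ∧ (f ∩ (l.erase u)).Nonempty then 1 else 0)
                = ∑ l ∈ D, (if ∃ f ∈ E, (f ∩ N).card = 1 ∧ w ∈ f ∧ (f ∩ (l.erase u)).Nonempty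
                    then 1 else 0) := by
                  apply Finset.sum_congr rfl
                  intro l _
                  by_cases hP : ∃ f ∈ E, (f ∩ N).card = 1 ∧ w ∈ f ∧ (f ∩ (l.erase u)).Nonempty
                  · rw [if_pos hP, if_pos ⟨hw.1, hw.2, hP⟩]
                  · rw [if_neg hP, if_neg (fun h => hP h.2.2)]
              _ = (D.filter (fun l => ∃ f ∈ E, (f ∩ N).card = 1 ∧ w ∈ f ∧
                    (f ∩ (l.erase u)).Nonempty)).card := by rw [Finset.card_filter]
              _ ≤ t - 1 := key_count E t hlin hfree u w hw.1 hw.2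
          · rw [if_neg hw]
            apply le_of_eq
            apply Finset.sum_eq_zero
            intro l _
            rw [if_neg (fun h => hw ⟨h.1, h.2.1⟩)]
      _ = (t - 1) * B.card := by
          rw [Finset.sum_ite, Finset.sum_const, Finset.sum_const, smul_eq_mul, smul_eq_mul,
            mul_zero, add_zero, hBdef, mul_comm]
  have hcast : ((∑ l ∈ D, (Finset.univ.filter (fun w : V => w ∉ N ∧ w ≠ u ∧
      ∃ f ∈ E, (f ∩ N).card = 1 ∧ w ∈ f ∧ (f ∩ (l.erase u)).Nonempty)).card : ℕ) : ℝ)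
      ≤ (((t - 1) * B.card : ℕ) : ℝ) := Nat.cast_le.mpr hnat
  rw [Nat.cast_sum] at hcast
  refine le_trans hcast ?_
  rw [hBcard]
  have hk1 : 1 ≤ k := by omega
  rw [Nat.cast_mul, Nat.cast_sub ht, Nat.cast_sub hle, Nat.cast_add, Nat.cast_mul,
    Nat.cast_sub hk1]
  push_cast
  exact le_of_eq (by ring)
end

section
/- Let H be a connected linear k-uniform hypergraph on n vertices (n, k ≥ 3) with no Berge-B_s and no Berge-K_{2,t}, where s ≥ 2 and t ≥ 1. Then for any vertex u, Σ_{v ∈ N_u} d_v ≤ (t-1)(n-1)/(k-1) + [ (6k² - 15k + 10)(s-1)/2 - (t-1) ]·d_u. -/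
attribute [local instance] Classical.propDecidable

open Finset

section Helpers

lemma sum_card_filter_comm {α β : Type*} (A : Finset α) (B : Finset β) (R : α → β → Prop)
    [∀ a b, Decidable (R a b)] :
    ∑ a ∈ A, (B.filter (fun b => R a b)).card = ∑ b ∈ B, (A.filter (fun a => R a b)).card := by
  simp only [Finset.card_filter]
  exact Finset.sum_comm

lemma exists_section {α β : Type*} [DecidableEq β] (S : Finset α) (φ : α → β) :
    ∃ T ⊆ S, T.card = (S.image φ).card ∧ Set.InjOn φ ↑T := by
  induction S using Finset.strongInduction with
  | _ S ih =>
    rcases S.eq_empty_or_nonempty with rfl | ⟨x, hx⟩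
    · exact ⟨∅, by simp⟩
    · set S' := S.filter (fun y => φ y ≠ φ x) with hS'
      have hsub : S' ⊆ S := Finset.filter_subset _ _
      have hxS' : x ∉ S' := by simp [hS']
      have hlt : S' ⊂ S := Finset.ssubset_iff_of_subset hsub |>.mpr ⟨x, hx, hxS'⟩
      obtain ⟨T', hT'sub, hT'card, hT'inj⟩ := ih S' hlt
      refine ⟨insert x T', ?_, ?_, ?_⟩
      · exact Finset.insert_subset hx (hT'sub.trans hsub)
      · have hxT' : x ∉ T' := fun h => hxS' (hT'sub h)
        rw [Finset.card_insert_of_notMem hxT', hT'card]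
        have himg : S.image φ = insert (φ x) (S'.image φ) := by
          ext b
          simp only [Finset.mem_image, Finset.mem_insert, hS', Finset.mem_filter]
          constructor
          · rintro ⟨y, hy, rfl⟩
            by_cases h : φ y = φ x
            · exact Or.inl h
            · exact Or.inr ⟨y, ⟨hy, h⟩, rfl⟩
          · rintro (rfl | ⟨y, ⟨hy, _⟩, rfl⟩)
            · exact ⟨x, hx, rfl⟩
            · exact ⟨y, hy, rfl⟩
        have hnotin : φ x ∉ S'.image φ := by
          simp only [Finset.mem_image, hS', Finset.mem_filter]
          rintro ⟨y, ⟨_, hne⟩, h⟩; exact hne h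
        rw [himg, Finset.card_insert_of_notMem hnotin]
      · intro a ha b hb hab
        simp only [Finset.coe_insert, Set.mem_insert_iff, Finset.mem_coe] at ha hb
        rcases ha with rfl | ha <;> rcases hb with rfl | hb
        · rfl
        · exfalso; have := (Finset.mem_filter.mp (hT'sub hb)).2; exact this hab.symm
        · exfalso; have := (Finset.mem_filter.mp (hT'sub ha)).2; exact this hab
        · exact hT'inj ha hb hab

lemma exists_injOn_pair {α β γ : Type*} [DecidableEq β] [DecidableEq γ]
    (S : Finset α) (φ : α → β) (ψ : α → γ) (K : ℕ) (hK : 1 ≤ K)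
    (hφ : ∀ x ∈ S, (S.filter (fun y => φ y = φ x)).card ≤ K)
    (hψ : ∀ x ∈ S, (S.filter (fun y => ψ y = ψ x)).card ≤ K) :
    ∃ T ⊆ S, Set.InjOn φ ↑T ∧ Set.InjOn ψ ↑T ∧ S.card ≤ (2 * K - 1) * T.card := by
  induction S using Finset.strongInduction with
  | _ S ih =>
    rcases S.eq_empty_or_nonempty with rfl | ⟨x, hx⟩
    · exact ⟨∅, by simp⟩
    · set B := S.filter (fun y => φ y = φ x ∨ ψ y = ψ x) with hB
      set S' := S.filter (fun y => ¬(φ y = φ x ∨ ψ y = ψ x)) with hS'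
      have hsub : S' ⊆ S := Finset.filter_subset _ _
      have hxS' : x ∉ S' := by simp [hS']
      have hlt : S' ⊂ S := Finset.ssubset_iff_of_subset hsub |>.mpr ⟨x, hx, hxS'⟩
      have hφ' : ∀ y ∈ S', (S'.filter (fun z => φ z = φ y)).card ≤ K := fun y hy =>
        le_trans (Finset.card_le_card (Finset.filter_subset_filter _ hsub)) (hφ y (hsub hy))
      have hψ' : ∀ y ∈ S', (S'.filter (fun z => ψ z = ψ y)).card ≤ K := fun y hy =>
        le_trans (Finset.card_le_card (Finset.filter_subset_filter _ hsub)) (hψ y (hsub hy))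
      obtain ⟨T', hT'sub, hinjφ, hinjψ, hcard⟩ := ih S' hlt hφ' hψ'
      have hxT' : x ∉ T' := fun h => hxS' (hT'sub h)
      refine ⟨insert x T', Finset.insert_subset hx (hT'sub.trans hsub), ?_, ?_, ?_⟩
      · intro a ha b hb hab
        simp only [Finset.coe_insert, Set.mem_insert_iff, Finset.mem_coe] at ha hb
        rcases ha with rfl | ha <;> rcases hb with rfl | hb
        · rfl
        · exact absurd (Or.inl hab.symm) (Finset.mem_filter.mp (hT'sub hb)).2
        · exact absurd (Or.inl hab) (Finset.mem_filter.mp (hT'sub ha)).2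
        · exact hinjφ ha hb hab
      · intro a ha b hb hab
        simp only [Finset.coe_insert, Set.mem_insert_iff, Finset.mem_coe] at ha hb
        rcases ha with rfl | ha <;> rcases hb with rfl | hb
        · rfl
        · exact absurd (Or.inr hab.symm) (Finset.mem_filter.mp (hT'sub hb)).2
        · exact absurd (Or.inr hab) (Finset.mem_filter.mp (hT'sub ha)).2
        · exact hinjψ ha hb hab
      · have hBcard : B.card ≤ 2 * K - 1 := by
          have h1 : B ⊆ S.filter (fun y => φ y = φ x) ∪ S.filter (fun y => ψ y = ψ x) := by
            intro y hy
            rw [hB, Finset.mem_filter] at hy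
            rcases hy.2 with h | h
            · exact Finset.mem_union_left _ (Finset.mem_filter.mpr ⟨hy.1, h⟩)
            · exact Finset.mem_union_right _ (Finset.mem_filter.mpr ⟨hy.1, h⟩)
          have h2 : x ∈ S.filter (fun y => φ y = φ x) ∩ S.filter (fun y => ψ y = ψ x) := by
            simp [hx]
          have h3 := Finset.card_union_add_card_inter (S.filter (fun y => φ y = φ x))
            (S.filter (fun y => ψ y = ψ x))
          have h4 : 1 ≤ (S.filter (fun y => φ y = φ x) ∩ S.filter (fun y => ψ y = ψ x)).card :=
            Finset.card_pos.mpr ⟨x, h2⟩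
          have h5 := Finset.card_le_card h1
          have h6 := hφ x hx
          have h7 := hψ x hx
          omega
        have hsplit : S.card ≤ B.card + S'.card := by
          have : S = B ∪ S' := by
            rw [hB, hS', Finset.filter_union_filter_not_eq]
          rw [this]; exact Finset.card_union_le _ _
        have hTcard : (insert x T').card = T'.card + 1 := Finset.card_insert_of_notMem hxT'
        rw [hTcard]
        calc S.card ≤ B.card + S'.card := hsplit
          _ ≤ (2*K-1) + (2*K-1) * T'.card := Nat.add_le_add hBcard hcard
          _ = (2*K-1) * (T'.card + 1) := by ring

lemma grouping_lemma {α β : Type*} [DecidableEq α] [DecidableEq β] (C : Finset α) (φ : α → β) :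
    2 * C.card ≤ 2 * (C.image φ).card
      + ∑ c ∈ C, (C.filter (fun c' => c' ≠ c ∧ φ c' = φ c)).card := by
  have hmaps : ∀ c ∈ C, φ c ∈ C.image φ := fun c hc => Finset.mem_image_of_mem φ hc
  have hfib : C.card = ∑ b ∈ C.image φ, (C.filter (fun c => φ c = b)).card :=
    Finset.card_eq_sum_card_fiberwise hmaps
  have hterm : ∀ c ∈ C, (C.filter (fun c' => c' ≠ c ∧ φ c' = φ c)).card
      = (C.filter (fun c' => φ c' = φ c)).card - 1 := by
    intro c hc
    have : C.filter (fun c' => c' ≠ c ∧ φ c' = φ c)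
        = (C.filter (fun c' => φ c' = φ c)).erase c := by
      ext y; simp only [Finset.mem_filter, Finset.mem_erase]; tauto
    rw [this]
    exact Finset.card_erase_of_mem (by simp [hc])
  have hsum : ∑ c ∈ C, (C.filter (fun c' => c' ≠ c ∧ φ c' = φ c)).card
      = ∑ b ∈ C.image φ, ((C.filter (fun c => φ c = b)).card
          * ((C.filter (fun c => φ c = b)).card - 1)) := by
    rw [Finset.sum_congr rfl hterm]
    rw [← Finset.sum_fiberwise_of_maps_to hmaps
      (fun c => (C.filter (fun c' => φ c' = φ c)).card - 1)]
    refine Finset.sum_congr rfl fun b hb => ?_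
    have : ∀ c ∈ C.filter (fun c => φ c = b),
        (C.filter (fun c' => φ c' = φ c)).card - 1
          = (C.filter (fun c => φ c = b)).card - 1 := by
      intro c hc
      have := (Finset.mem_filter.mp hc).2
      rw [this]
    rw [Finset.sum_congr rfl this, Finset.sum_const, smul_eq_mul]
  rw [hsum, hfib, Finset.mul_sum, Finset.card_eq_sum_ones (C.image φ), Finset.mul_sum,
    ← Finset.sum_add_distrib]
  refine Finset.sum_le_sum fun b hb => ?_
  have hj : 1 ≤ (C.filter (fun c => φ c = b)).card := by
    obtain ⟨c, hc, rfl⟩ := Finset.mem_image.mp hb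
    exact Finset.card_pos.mpr ⟨c, Finset.mem_filter.mpr ⟨hc, rfl⟩⟩
  obtain ⟨m, hm⟩ := Nat.exists_eq_add_of_le hj
  rw [hm]
  cases m with
  | zero => simp
  | succ m =>
    have : 1 + (m+1) - 1 = m + 1 := by omega
    rw [this]
    nlinarith

/-- The (unique, in a linear hypergraph) edge through two vertices. -/
noncomputable def pickEdge {V : Type*} (E : Finset (Finset V)) (a b : V) : Finset V :=
  if h : ∃ e ∈ E, a ∈ e ∧ b ∈ e then h.choose else ∅

lemma pickEdge_spec {V : Type*} {E : Finset (Finset V)} {a b : V}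
    (h : ∃ e ∈ E, a ∈ e ∧ b ∈ e) :
    pickEdge E a b ∈ E ∧ a ∈ pickEdge E a b ∧ b ∈ pickEdge E a b := by
  rw [pickEdge, dif_pos h]
  exact ⟨h.choose_spec.1, h.choose_spec.2.1, h.choose_spec.2.2⟩

lemma edge_unique {V : Type*} [DecidableEq V] {E : Finset (Finset V)}
    (hlin : ∀ e ∈ E, ∀ f ∈ E, e ≠ f → (e ∩ f).card ≤ 1) {e f : Finset V} {a b : V}
    (he : e ∈ E) (hf : f ∈ E) (hab : a ≠ b)
    (hae : a ∈ e) (hbe : b ∈ e) (haf : a ∈ f) (hbf : b ∈ f) : e = f := by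
  by_contra hne
  have h2 : ({a, b} : Finset V) ⊆ e ∩ f := by
    intro x hx
    rcases Finset.mem_insert.mp hx with rfl | hx
    · exact Finset.mem_inter.mpr ⟨hae, haf⟩
    · rw [Finset.mem_singleton] at hx; subst hx
      exact Finset.mem_inter.mpr ⟨hbe, hbf⟩
  have h3 := Finset.card_le_card h2
  rw [Finset.card_insert_of_notMem (by simp [hab]), Finset.card_singleton] at h3
  have := hlin e he f hf hne
  omega

lemma pickEdge_eq {V : Type*} [DecidableEq V] {E : Finset (Finset V)}
    (hlin : ∀ e ∈ E, ∀ f ∈ E, e ≠ f → (e ∩ f).card ≤ 1) {e : Finset V} {a b : V}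
    (hab : a ≠ b) (he : e ∈ E) (ha : a ∈ e) (hb : b ∈ e) : pickEdge E a b = e := by
  have hex : ∃ e ∈ E, a ∈ e ∧ b ∈ e := ⟨e, he, ha, hb⟩
  obtain ⟨h1, h2, h3⟩ := pickEdge_spec hex
  exact edge_unique hlin h1 he hab h2 h3 ha hb

lemma exists_fin_inj {α : Type*} (T : Finset α) (n : ℕ) (hn : n ≤ T.card) :
    ∃ c : Fin n → α, Function.Injective c ∧ ∀ i, c i ∈ T := by
  classical
  obtain ⟨T', hT'sub, hT'card⟩ := Finset.exists_subset_card_eq hn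
  refine ⟨fun i => (T'.equivFin.symm (Fin.cast hT'card.symm i) : α), ?_, ?_⟩
  · intro i j hij
    have := T'.equivFin.symm.injective (Subtype.val_injective hij)
    exact Fin.cast_injective _ this
  · intro i
    exact hT'sub (T'.equivFin.symm (Fin.cast hT'card.symm i)).2

lemma mem_hNbhd {V : Type*} [Fintype V] [DecidableEq V] {E : Finset (Finset V)} {u v : V} :
    v ∈ hNbhd E u ↔ v ≠ u ∧ ∃ e ∈ E, u ∈ e ∧ v ∈ e := by
  simp [hNbhd]

end Helpers
section Structural

variable {V : Type*} [Fintype V] [DecidableEq V]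

lemma Sv_bound (E : Finset (Finset V)) (k s : ℕ)
    (hk : 3 ≤ k) (hs : 2 ≤ s)
    (hunif : ∀ e ∈ E, e.card = k)
    (hlin : ∀ e ∈ E, ∀ f ∈ E, e ≠ f → (e ∩ f).card ≤ 1)
    (hB : BergeBookFree E s) (u v : V) (hv : v ∈ hNbhd E u) :
    ((hNbhd E u).filter (fun c => c ≠ v ∧ ∃ e ∈ E, u ∉ e ∧ v ∈ e ∧ c ∈ e)).card
      ≤ (2 * k - 3) * (s - 1) := by
  set N := hNbhd E u with hN
  set S := N.filter (fun c => c ≠ v ∧ ∃ e ∈ E, u ∉ e ∧ v ∈ e ∧ c ∈ e) with hS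
  obtain ⟨hvu, hv_ex⟩ := mem_hNbhd.mp hv
  have hmem : ∀ c ∈ S, c ≠ u ∧ c ≠ v ∧ (∃ e ∈ E, u ∈ e ∧ c ∈ e) ∧
      (∃ e ∈ E, v ∈ e ∧ c ∈ e) ∧ u ∉ pickEdge E v c := by
    intro c hc
    rw [hS, Finset.mem_filter] at hc
    obtain ⟨hcN, hcv, e, heE, hue, hve, hce⟩ := hc
    obtain ⟨hcu, hc_ex⟩ := mem_hNbhd.mp hcN
    have hpe : pickEdge E v c = e := pickEdge_eq hlin (Ne.symm hcv) heE hve hce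
    exact ⟨hcu, hcv, hc_ex, ⟨e, heE, hve, hce⟩, hpe ▸ hue⟩
  have hφu : ∀ c ∈ S, pickEdge E u c ∈ E ∧ u ∈ pickEdge E u c ∧ c ∈ pickEdge E u c :=
    fun c hc => pickEdge_spec (hmem c hc).2.2.1
  have hψv : ∀ c ∈ S, pickEdge E v c ∈ E ∧ v ∈ pickEdge E v c ∧ c ∈ pickEdge E v c :=
    fun c hc => pickEdge_spec (hmem c hc).2.2.2.1
  have hfibφ : ∀ x ∈ S, (S.filter (fun y => pickEdge E u y = pickEdge E u x)).card ≤ k - 1 := by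
    intro x hx
    have hsub : S.filter (fun y => pickEdge E u y = pickEdge E u x) ⊆ (pickEdge E u x).erase u := by
      intro y hy
      rw [Finset.mem_filter] at hy
      refine Finset.mem_erase.mpr ⟨(hmem y hy.1).1, ?_⟩
      have := (hφu y hy.1).2.2
      rwa [hy.2] at this
    calc (S.filter _).card ≤ ((pickEdge E u x).erase u).card := Finset.card_le_card hsub
      _ = k - 1 := by
          rw [Finset.card_erase_of_mem (hφu x hx).2.1, hunif _ (hφu x hx).1]
  have hfibψ : ∀ x ∈ S, (S.filter (fun y => pickEdge E v y = pickEdge E v x)).card ≤ k - 1 := by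
    intro x hx
    have hsub : S.filter (fun y => pickEdge E v y = pickEdge E v x) ⊆ (pickEdge E v x).erase v := by
      intro y hy
      rw [Finset.mem_filter] at hy
      refine Finset.mem_erase.mpr ⟨(hmem y hy.1).2.1, ?_⟩
      have := (hψv y hy.1).2.2
      rwa [hy.2] at this
    calc (S.filter _).card ≤ ((pickEdge E v x).erase v).card := Finset.card_le_card hsub
      _ = k - 1 := by
          rw [Finset.card_erase_of_mem (hψv x hx).2.1, hunif _ (hψv x hx).1]
  by_contra hcon
  push_neg at hcon
  obtain ⟨T, hTsub, hinjφ, hinjψ, hcard⟩ := exists_injOn_pair S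
    (fun c => pickEdge E u c) (fun c => pickEdge E v c) (k-1) (by omega) hfibφ hfibψ
  have hTs : s ≤ T.card := by
    have h1 : 2 * (k-1) - 1 = 2*k - 3 := by omega
    rw [h1] at hcard
    by_contra h
    push_neg at h
    have : S.card ≤ (2*k-3) * (s-1) :=
      le_trans hcard (Nat.mul_le_mul_left _ (by omega))
    omega
  obtain ⟨c, hcinj, hcT⟩ := exists_fin_inj T s hTs
  have hcS : ∀ i, c i ∈ S := fun i => hTsub (hcT i)
  have he₀ := pickEdge_spec ⟨_, hv_ex.choose_spec.1, hv_ex.choose_spec.2⟩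
  refine hB ⟨u, v, c, pickEdge E u v, fun i => pickEdge E u (c i),
    fun i => pickEdge E v (c i), Ne.symm hvu, hcinj,
    fun i => ⟨(hmem _ (hcS i)).1, (hmem _ (hcS i)).2.1⟩,
    he₀.1, he₀.2.1, he₀.2.2,
    fun i => hφu _ (hcS i), fun i => hψv _ (hcS i), ?_, ?_, ?_, ?_⟩
  · intro i j hij
    exact hcinj (hinjφ (Finset.mem_coe.mpr (hcT i)) (Finset.mem_coe.mpr (hcT j)) hij)
  · intro i j hij
    exact hcinj (hinjψ (Finset.mem_coe.mpr (hcT i)) (Finset.mem_coe.mpr (hcT j)) hij)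
  · intro i j hne
    have hu1 : u ∈ pickEdge E u (c i) := (hφu _ (hcS i)).2.1
    have hu2 : u ∉ pickEdge E v (c j) := (hmem _ (hcS j)).2.2.2.2
    simp only [] at hne
    rw [hne] at hu1; exact hu2 hu1
  · intro i
    constructor
    · intro heq
      -- e₀ = f i : then c i ∈ e₀, so e₀ = g i by uniqueness, but u ∈ e₀, u ∉ g i
      have hci_e₀ : c i ∈ pickEdge E u v := by
        rw [heq]; exact (hφu _ (hcS i)).2.2
      have : pickEdge E u v = pickEdge E v (c i) :=
        edge_unique hlin he₀.1 (hψv _ (hcS i)).1 (Ne.symm (hmem _ (hcS i)).2.1)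
          he₀.2.2 hci_e₀ (hψv _ (hcS i)).2.1 (hψv _ (hcS i)).2.2
      have := this ▸ he₀.2.1
      exact (hmem _ (hcS i)).2.2.2.2 this
    · intro heq
      have := heq ▸ he₀.2.1
      exact (hmem _ (hcS i)).2.2.2.2 this

lemma rw_bound (E : Finset (Finset V)) (t : ℕ) (ht : 1 ≤ t)
    (hlin : ∀ e ∈ E, ∀ f ∈ E, e ≠ f → (e ∩ f).card ≤ 1)
    (hK : BergeK2tFree E t) (u w : V) (hw : w ∉ insert u (hNbhd E u)) :
    (((hNbhd E u).filter (fun c => ∃ e ∈ E, u ∉ e ∧ (e ∩ hNbhd E u).card = 1 ∧ w ∈ e ∧ c ∈ e)).image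
      (fun c => pickEdge E u c)).card ≤ t - 1 := by
  set N := hNbhd E u with hN
  set Cw := N.filter (fun c => ∃ e ∈ E, u ∉ e ∧ (e ∩ N).card = 1 ∧ w ∈ e ∧ c ∈ e) with hCw
  have hwu : w ≠ u := fun h => hw (by simp [h])
  have hwN : w ∉ N := fun h => hw (Finset.mem_insert_of_mem h)
  have hmem : ∀ c ∈ Cw, c ≠ u ∧ c ≠ w ∧ (∃ e ∈ E, u ∈ e ∧ c ∈ e) ∧
      pickEdge E w c ∈ E ∧ w ∈ pickEdge E w c ∧ c ∈ pickEdge E w c ∧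
      u ∉ pickEdge E w c ∧ (pickEdge E w c ∩ N).card = 1 := by
    intro x hx
    rw [hCw, Finset.mem_filter] at hx
    obtain ⟨hxN, e, heE, hue, hcard1, hwe, hxe⟩ := hx
    obtain ⟨hxu, hx_ex⟩ := mem_hNbhd.mp hxN
    have hxw : x ≠ w := fun h => hwN (h ▸ hxN)
    have hpe : pickEdge E w x = e := pickEdge_eq hlin (Ne.symm hxw) heE hwe hxe
    exact ⟨hxu, hxw, hx_ex, hpe ▸ heE, hpe ▸ hwe, hpe ▸ hxe, hpe ▸ hue, hpe ▸ hcard1⟩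
  have hmemN : ∀ c ∈ Cw, c ∈ N := fun c hc => (Finset.mem_filter.mp hc).1
  by_contra hcon
  push_neg at hcon
  obtain ⟨T, hTsub, hTcard, hinj⟩ := exists_section Cw (fun c => pickEdge E u c)
  have hTs : t ≤ T.card := by omega
  obtain ⟨c, hcinj, hcT⟩ := exists_fin_inj T t hTs
  have hcC : ∀ i, c i ∈ Cw := fun i => hTsub (hcT i)
  have hφu : ∀ i, pickEdge E u (c i) ∈ E ∧ u ∈ pickEdge E u (c i) ∧ c i ∈ pickEdge E u (c i) :=
    fun i => pickEdge_spec (hmem _ (hcC i)).2.2.1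
  refine hK ⟨u, w, c, fun i => pickEdge E u (c i), fun i => pickEdge E w (c i),
    Ne.symm hwu, hcinj,
    fun i => ⟨(hmem _ (hcC i)).1, (hmem _ (hcC i)).2.1⟩,
    hφu,
    fun i => ⟨(hmem _ (hcC i)).2.2.2.1, (hmem _ (hcC i)).2.2.2.2.1, (hmem _ (hcC i)).2.2.2.2.2.1⟩,
    ?_, ?_, ?_⟩
  · intro i j hij
    exact hcinj (hinj (Finset.mem_coe.mpr (hcT i)) (Finset.mem_coe.mpr (hcT j)) hij)
  · intro i j hij
    simp only [] at hij
    have h1 : c i ∈ pickEdge E w (c i) ∩ N :=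
      Finset.mem_inter.mpr ⟨(hmem _ (hcC i)).2.2.2.2.2.1, hmemN _ (hcC i)⟩
    have h2 : c j ∈ pickEdge E w (c i) ∩ N := by
      rw [hij]
      exact Finset.mem_inter.mpr ⟨(hmem _ (hcC j)).2.2.2.2.2.1, hmemN _ (hcC j)⟩
    have hle : (pickEdge E w (c i) ∩ N).card ≤ 1 := le_of_eq (hmem _ (hcC i)).2.2.2.2.2.2.2
    exact hcinj (Finset.card_le_one.mp hle _ h2 _ h1).symm
  · intro i j hij
    simp only [] at hij
    have hu1 : u ∈ pickEdge E u (c i) := (hφu i).2.1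
    rw [hij] at hu1
    exact (hmem _ (hcC j)).2.2.2.2.2.2.1 hu1

lemma pair_bound (E : Finset (Finset V)) (k s : ℕ)
    (hk : 3 ≤ k) (hs : 2 ≤ s)
    (hunif : ∀ e ∈ E, e.card = k)
    (hlin : ∀ e ∈ E, ∀ f ∈ E, e ≠ f → (e ∩ f).card ≤ 1)
    (hB : BergeBookFree E s) (u c c' : V)
    (hc : c ∈ hNbhd E u) (hc' : c' ∈ hNbhd E u) (hne : c' ≠ c)
    (hφ : pickEdge E u c' = pickEdge E u c) :
    ((Finset.univ \ insert u (hNbhd E u)).filter (fun w =>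
        (∃ e ∈ E, u ∉ e ∧ (e ∩ hNbhd E u).card = 1 ∧ w ∈ e ∧ c ∈ e) ∧
        (∃ e ∈ E, u ∉ e ∧ (e ∩ hNbhd E u).card = 1 ∧ w ∈ e ∧ c' ∈ e))).card
      ≤ (2 * k - 3) * (s - 1) := by
  set N := hNbhd E u with hN
  set S := (Finset.univ \ insert u N).filter (fun w =>
        (∃ e ∈ E, u ∉ e ∧ (e ∩ N).card = 1 ∧ w ∈ e ∧ c ∈ e) ∧
        (∃ e ∈ E, u ∉ e ∧ (e ∩ N).card = 1 ∧ w ∈ e ∧ c' ∈ e)) with hSdef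
  have hcN : c ∈ N := hc
  have hc'N : c' ∈ N := hc'
  have hmem : ∀ w ∈ S, w ≠ c ∧ w ≠ c' ∧
      (pickEdge E c w ∈ E ∧ c ∈ pickEdge E c w ∧ w ∈ pickEdge E c w ∧
        u ∉ pickEdge E c w ∧ (pickEdge E c w ∩ N).card = 1) ∧
      (pickEdge E c' w ∈ E ∧ c' ∈ pickEdge E c' w ∧ w ∈ pickEdge E c' w ∧
        u ∉ pickEdge E c' w ∧ (pickEdge E c' w ∩ N).card = 1) := by
    intro w hw
    rw [hSdef, Finset.mem_filter] at hw
    obtain ⟨hwW, ⟨e, heE, hue, hcard1, hwe, hce⟩, ⟨e', he'E, hue', hcard1', hwe', hc'e'⟩⟩ := hw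
    have hwN : w ∉ N := fun h => (Finset.mem_sdiff.mp hwW).2 (Finset.mem_insert_of_mem h)
    have hwc : w ≠ c := fun h => hwN (h ▸ hcN)
    have hwc' : w ≠ c' := fun h => hwN (h ▸ hc'N)
    have hpe : pickEdge E c w = e := pickEdge_eq hlin (Ne.symm hwc) heE hce hwe
    have hpe' : pickEdge E c' w = e' := pickEdge_eq hlin (Ne.symm hwc') he'E hc'e' hwe'
    exact ⟨hwc, hwc', ⟨hpe ▸ heE, hpe ▸ hce, hpe ▸ hwe, hpe ▸ hue, hpe ▸ hcard1⟩,
      ⟨hpe' ▸ he'E, hpe' ▸ hc'e', hpe' ▸ hwe', hpe' ▸ hue', hpe' ▸ hcard1'⟩⟩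
  have hfibφ : ∀ x ∈ S, (S.filter (fun y => pickEdge E c y = pickEdge E c x)).card ≤ k - 1 := by
    intro x hx
    have hsub : S.filter (fun y => pickEdge E c y = pickEdge E c x)
        ⊆ (pickEdge E c x).erase c := by
      intro y hy
      rw [Finset.mem_filter] at hy
      refine Finset.mem_erase.mpr ⟨fun h => (hmem y hy.1).1 (h ▸ rfl), ?_⟩
      have := (hmem y hy.1).2.2.1.2.2.1
      rwa [hy.2] at this
    calc (S.filter _).card ≤ ((pickEdge E c x).erase c).card := Finset.card_le_card hsub
      _ = k - 1 := by
          rw [Finset.card_erase_of_mem (hmem x hx).2.2.1.2.1, hunif _ (hmem x hx).2.2.1.1]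
  have hfibψ : ∀ x ∈ S, (S.filter (fun y => pickEdge E c' y = pickEdge E c' x)).card ≤ k - 1 := by
    intro x hx
    have hsub : S.filter (fun y => pickEdge E c' y = pickEdge E c' x)
        ⊆ (pickEdge E c' x).erase c' := by
      intro y hy
      rw [Finset.mem_filter] at hy
      refine Finset.mem_erase.mpr ⟨fun h => (hmem y hy.1).2.1 (h ▸ rfl), ?_⟩
      have := (hmem y hy.1).2.2.2.2.2.1
      rwa [hy.2] at this
    calc (S.filter _).card ≤ ((pickEdge E c' x).erase c').card := Finset.card_le_card hsub
      _ = k - 1 := by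
          rw [Finset.card_erase_of_mem (hmem x hx).2.2.2.2.1, hunif _ (hmem x hx).2.2.2.1]
  by_contra hcon
  push_neg at hcon
  obtain ⟨T, hTsub, hinjφ, hinjψ, hcard⟩ := exists_injOn_pair S
    (fun w => pickEdge E c w) (fun w => pickEdge E c' w) (k-1) (by omega) hfibφ hfibψ
  have hTs : s ≤ T.card := by
    have h1 : 2 * (k-1) - 1 = 2*k - 3 := by omega
    rw [h1] at hcard
    by_contra h
    push_neg at h
    have : S.card ≤ (2*k-3) * (s-1) :=
      le_trans hcard (Nat.mul_le_mul_left _ (by omega))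
    omega
  obtain ⟨w, hwinj, hwT⟩ := exists_fin_inj T s hTs
  have hwS : ∀ i, w i ∈ S := fun i => hTsub (hwT i)
  -- the base edge e₀ = pickEdge E u c, containing u, c and c'
  have hc_ex : ∃ e ∈ E, u ∈ e ∧ c ∈ e := (mem_hNbhd.mp hcN).2
  have hc'_ex : ∃ e ∈ E, u ∈ e ∧ c' ∈ e := (mem_hNbhd.mp hc'N).2
  have he₀ := pickEdge_spec hc_ex
  have hc'e₀ : c' ∈ pickEdge E u c := by
    have := (pickEdge_spec hc'_ex).2.2
    rwa [hφ] at this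
  refine hB ⟨c, c', w, pickEdge E u c, fun i => pickEdge E c (w i),
    fun i => pickEdge E c' (w i), Ne.symm hne, hwinj,
    fun i => ⟨(hmem _ (hwS i)).1, (hmem _ (hwS i)).2.1⟩,
    he₀.1, he₀.2.2, hc'e₀,
    fun i => ⟨(hmem _ (hwS i)).2.2.1.1, (hmem _ (hwS i)).2.2.1.2.1, (hmem _ (hwS i)).2.2.1.2.2.1⟩,
    fun i => ⟨(hmem _ (hwS i)).2.2.2.1, (hmem _ (hwS i)).2.2.2.2.1, (hmem _ (hwS i)).2.2.2.2.2.1⟩,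
    ?_, ?_, ?_, ?_⟩
  · intro i j hij
    exact hwinj (hinjφ (Finset.mem_coe.mpr (hwT i)) (Finset.mem_coe.mpr (hwT j)) hij)
  · intro i j hij
    exact hwinj (hinjψ (Finset.mem_coe.mpr (hwT i)) (Finset.mem_coe.mpr (hwT j)) hij)
  · intro i j hij
    simp only [] at hij
    have h1 : c ∈ pickEdge E c (w i) ∩ N :=
      Finset.mem_inter.mpr ⟨(hmem _ (hwS i)).2.2.1.2.1, hcN⟩
    have h2 : c' ∈ pickEdge E c (w i) ∩ N := by
      rw [hij]
      exact Finset.mem_inter.mpr ⟨(hmem _ (hwS j)).2.2.2.2.1, hc'N⟩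
    have hle : (pickEdge E c (w i) ∩ N).card ≤ 1 := le_of_eq (hmem _ (hwS i)).2.2.1.2.2.2.2
    exact hne (Finset.card_le_one.mp hle _ h2 _ h1)
  · intro i
    constructor
    · intro heq
      have := heq ▸ he₀.2.1
      exact (hmem _ (hwS i)).2.2.1.2.2.2.1 this
    · intro heq
      have := heq ▸ he₀.2.1
      exact (hmem _ (hwS i)).2.2.2.2.2.2.1 this

end Structural

set_option maxHeartbeats 1600000 in
/-- In a connected linear `k`-uniform hypergraph on `n ≥ 3` vertices (`k ≥ 3`) with
no Berge-`B_s` and no Berge-`K_{2,t}` (`s ≥ 2`, `t ≥ 1`), for any vertex `u`: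
`Σ_{v ∈ N_u} d_v ≤ (t-1)(n-1)/(k-1) + [(6k²-15k+10)(s-1)/2 - (t-1)]·d_u`. -/
theorem sum_deg_nbhd_bound_book_k2t {V : Type*} [Fintype V] [DecidableEq V]
    (E : Finset (Finset V)) (k s t : ℕ)
    (hn : 3 ≤ Fintype.card V) (hk : 3 ≤ k) (hs : 2 ≤ s) (ht : 1 ≤ t)
    (hunif : ∀ e ∈ E, e.card = k)
    (hlin : ∀ e ∈ E, ∀ f ∈ E, e ≠ f → (e ∩ f).card ≤ 1)
    (hconn : ∀ u v : V, Relation.ReflTransGen (fun a b => ∃ e ∈ E, a ∈ e ∧ b ∈ e) u v)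
    (hB : BergeBookFree E s) (hK : BergeK2tFree E t) (u : V) :
    (∑ v ∈ hNbhd E u, (hDeg E v : ℝ))
      ≤ ((t : ℝ) - 1) * ((Fintype.card V : ℝ) - 1) / ((k : ℝ) - 1)
        + ((6 * (k : ℝ) ^ 2 - 15 * (k : ℝ) + 10) * ((s : ℝ) - 1) / 2 - ((t : ℝ) - 1))
          * (hDeg E u : ℝ) := by
  classical
  set N := hNbhd E u with hNdef
  set Eu := E.filter (fun e => u ∈ e) with hEudef
  set Ec := E.filter (fun e => ¬ u ∈ e) with hEcdef
  set W := Finset.univ \ insert u N with hWdef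
  set A := Ec.filter (fun e => (e ∩ N).card = 1) with hAdef
  have hDu : hDeg E u = Eu.card := rfl
  have huN : u ∉ N := by
    rw [hNdef]; intro h
    exact (mem_hNbhd.mp h).1 rfl
  have hEcE : ∀ e ∈ Ec, e ∈ E ∧ u ∉ e := fun e he => Finset.mem_filter.mp he
  -- |N| = D (k-1)
  have hNcard : N.card = Eu.card * (k-1) := by
    have hNbi : N = Eu.biUnion (fun e => e.erase u) := by
      ext x
      simp only [hNdef, mem_hNbhd, hEudef, Finset.mem_biUnion, Finset.mem_filter,
        Finset.mem_erase]
      constructor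
      · rintro ⟨hxu, e, he, hue, hxe⟩; exact ⟨e, ⟨he, hue⟩, hxu, hxe⟩
      · rintro ⟨e, ⟨he, hue⟩, hxu, hxe⟩; exact ⟨hxu, e, he, hue, hxe⟩
    have hdisj : ∀ e ∈ Eu, ∀ f ∈ Eu, e ≠ f → Disjoint (e.erase u) (f.erase u) := by
      intro e he f hf hne
      rw [Finset.disjoint_left]
      intro x hxe hxf
      rw [Finset.mem_erase] at hxe hxf
      have hsub2 : ({u, x} : Finset V) ⊆ e ∩ f := by
        intro y hy
        rcases Finset.mem_insert.mp hy with rfl | hy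
        · exact Finset.mem_inter.mpr ⟨(Finset.mem_filter.mp he).2, (Finset.mem_filter.mp hf).2⟩
        · rw [Finset.mem_singleton] at hy; subst hy
          exact Finset.mem_inter.mpr ⟨hxe.2, hxf.2⟩
      have h3 := Finset.card_le_card hsub2
      rw [Finset.card_insert_of_notMem (by simp [Ne.symm hxe.1]), Finset.card_singleton] at h3
      have := hlin e (Finset.mem_filter.mp he).1 f (Finset.mem_filter.mp hf).1 hne
      omega
    rw [hNbi, Finset.card_biUnion hdisj]
    have hcon : ∀ e ∈ Eu, (e.erase u).card = k - 1 := by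
      intro e he
      rw [Finset.card_erase_of_mem (Finset.mem_filter.mp he).2,
        hunif e (Finset.mem_filter.mp he).1]
    rw [Finset.sum_congr rfl hcon, Finset.sum_const, smul_eq_mul]
  -- degree sum = incidence count
  have key0 : ∑ v ∈ N, hDeg E v = ∑ e ∈ E, (e ∩ N).card := by
    have h1 : ∑ v ∈ N, hDeg E v = ∑ v ∈ N, (E.filter (fun e => v ∈ e)).card := rfl
    rw [h1, sum_card_filter_comm N E (fun v e => v ∈ e)]
    refine Finset.sum_congr rfl fun e he => ?_
    rw [Finset.filter_mem_eq_inter, Finset.inter_comm]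
  have hsplit : ∑ e ∈ E, (e ∩ N).card
      = (∑ e ∈ Eu, (e ∩ N).card) + ∑ e ∈ Ec, (e ∩ N).card :=
    (Finset.sum_filter_add_sum_filter_not E (fun e => u ∈ e) _).symm
  have hEupart : ∑ e ∈ Eu, (e ∩ N).card = Eu.card * (k-1) := by
    have h2 : ∀ e ∈ Eu, (e ∩ N).card = k - 1 := by
      intro e he
      obtain ⟨heE, hue⟩ := Finset.mem_filter.mp he
      have : e ∩ N = e.erase u := by
        ext x
        simp only [Finset.mem_inter, Finset.mem_erase, hNdef, mem_hNbhd]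
        constructor
        · rintro ⟨hxe, hxu, -⟩; exact ⟨hxu, hxe⟩
        · rintro ⟨hxu, hxe⟩; exact ⟨hxe, hxu, e, heE, hue, hxe⟩
      rw [this, Finset.card_erase_of_mem hue, hunif e heE]
    rw [Finset.sum_congr rfl h2, Finset.sum_const, smul_eq_mul]
  have hsum : ∑ v ∈ N, hDeg E v = Eu.card * (k-1) + ∑ e ∈ Ec, (e ∩ N).card := by
    rw [key0, hsplit, hEupart]
  -- T ≤ A + P
  have hTT : ∑ e ∈ Ec, (e ∩ N).card
      ≤ A.card + ∑ e ∈ Ec, (e ∩ N).card * ((e ∩ N).card - 1) := by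
    have h1 : A.card = ∑ e ∈ Ec, if (e ∩ N).card = 1 then 1 else 0 := Finset.card_filter _ _
    rw [h1, ← Finset.sum_add_distrib]
    refine Finset.sum_le_sum fun e he => ?_
    cases h : (e ∩ N).card with
    | zero => simp
    | succ m => cases m with
      | zero => simp
      | succ m =>
        rw [if_neg (by omega)]
        have h2 : m + 1 + 1 - 1 = m + 1 := rfl
        rw [h2]
        nlinarith
  -- P bound
  have hPP : ∑ e ∈ Ec, (e ∩ N).card * ((e ∩ N).card - 1)
      ≤ N.card * ((2*k-3)*(s-1)) := by
    have h1 : ∀ e ∈ Ec, (e ∩ N).card * ((e ∩ N).card - 1)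
        = ∑ v ∈ N, if v ∈ e then ((e ∩ N).erase v).card else 0 := by
      intro e he
      rw [← Finset.sum_filter]
      have h2 : N.filter (fun v => v ∈ e) = e ∩ N := by
        rw [Finset.filter_mem_eq_inter, Finset.inter_comm]
      rw [h2]
      have h3 : ∀ v ∈ e ∩ N, ((e ∩ N).erase v).card = (e ∩ N).card - 1 :=
        fun v hv => Finset.card_erase_of_mem hv
      rw [Finset.sum_congr rfl h3, Finset.sum_const, smul_eq_mul]
    rw [Finset.sum_congr rfl h1, Finset.sum_comm]
    calc ∑ v ∈ N, ∑ e ∈ Ec, (if v ∈ e then ((e ∩ N).erase v).card else 0)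
        ≤ ∑ _v ∈ N, (2*k-3)*(s-1) := Finset.sum_le_sum ?_
      _ = N.card * ((2*k-3)*(s-1)) := by rw [Finset.sum_const, smul_eq_mul]
    intro v hv
    rw [← Finset.sum_filter]
    have hdisj : ∀ e ∈ Ec.filter (fun e => v ∈ e), ∀ f ∈ Ec.filter (fun e => v ∈ e),
        e ≠ f → Disjoint ((e ∩ N).erase v) ((f ∩ N).erase v) := by
      intro e he f hf hne
      rw [Finset.disjoint_left]
      intro x hxe hxf
      rw [Finset.mem_erase, Finset.mem_inter] at hxe hxf
      obtain ⟨heEc, hve⟩ := Finset.mem_filter.mp he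
      obtain ⟨hfEc, hvf⟩ := Finset.mem_filter.mp hf
      have hsub2 : ({v, x} : Finset V) ⊆ e ∩ f := by
        intro y hy
        rcases Finset.mem_insert.mp hy with rfl | hy
        · exact Finset.mem_inter.mpr ⟨hve, hvf⟩
        · rw [Finset.mem_singleton] at hy; subst hy
          exact Finset.mem_inter.mpr ⟨hxe.2.1, hxf.2.1⟩
      have h3 := Finset.card_le_card hsub2
      rw [Finset.card_insert_of_notMem (by simp [Ne.symm hxe.1]), Finset.card_singleton] at h3
      have := hlin e (hEcE e heEc).1 f (hEcE f hfEc).1 hne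
      omega
    rw [← Finset.card_biUnion hdisj]
    have hsub : (Ec.filter (fun e => v ∈ e)).biUnion (fun e => (e ∩ N).erase v)
        ⊆ N.filter (fun c => c ≠ v ∧ ∃ e ∈ E, u ∉ e ∧ v ∈ e ∧ c ∈ e) := by
      intro x hx
      rw [Finset.mem_biUnion] at hx
      obtain ⟨e, he, hxe⟩ := hx
      rw [Finset.mem_erase, Finset.mem_inter] at hxe
      obtain ⟨heEc, hve⟩ := Finset.mem_filter.mp he
      exact Finset.mem_filter.mpr ⟨hxe.2.2, hxe.1,
        e, (hEcE e heEc).1, (hEcE e heEc).2, hve, hxe.2.1⟩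
    exact le_trans (Finset.card_le_card hsub) (Sv_bound E k s hk hs hunif hlin hB u v hv)
  -- A bound
  have hAA : 2 * (A.card * (k-1))
      ≤ 2*((t-1)*W.card) + N.card * ((k-2) * ((2*k-3)*(s-1))) := by
    have hwW : ∀ w ∈ W, w ∉ insert u N := fun w hw => (Finset.mem_sdiff.mp hw).2
    -- incidence count
    have hAinc : A.card * (k-1) = ∑ w ∈ W, (A.filter (fun e => w ∈ e)).card := by
      rw [← sum_card_filter_comm A W (fun e w => w ∈ e)]
      have h2 : ∀ e ∈ A, (W.filter (fun w => w ∈ e)).card = k - 1 := by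
        intro e he
        obtain ⟨heEc, hcard1⟩ := Finset.mem_filter.mp he
        obtain ⟨heE, hue⟩ := hEcE e heEc
        have h3 : W.filter (fun w => w ∈ e) = e \ insert u N := by
          ext x
          simp only [Finset.mem_filter, hWdef, Finset.mem_sdiff, Finset.mem_univ, true_and,
            Finset.mem_insert]
          tauto
        have h4 : e ∩ insert u N = e ∩ N := by
          ext x
          simp only [Finset.mem_inter, Finset.mem_insert]
          constructor
          · rintro ⟨hxe, rfl | hxN⟩
            · exact absurd hxe hue
            · exact ⟨hxe, hxN⟩
          · rintro ⟨hxe, hxN⟩; exact ⟨hxe, Or.inr hxN⟩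
        have h5 := Finset.card_sdiff_add_card_inter e (insert u N)
        rw [h4, hcard1, hunif e heE] at h5
        rw [h3]
        omega
      rw [Finset.sum_congr rfl h2, Finset.sum_const, smul_eq_mul, mul_comm]
    -- bijection with linked vertices
    have hbij : ∀ w ∈ W, (A.filter (fun e => w ∈ e)).card
        = (N.filter (fun c => ∃ e ∈ E, u ∉ e ∧ (e ∩ N).card = 1 ∧ w ∈ e ∧ c ∈ e)).card := by
      intro w hw
      have hwN : w ∉ N := fun h => hwW w hw (Finset.mem_insert_of_mem h)
      have hprop : ∀ e ∈ A.filter (fun e => w ∈ e), ∃ x, e ∩ N = {x} := by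
        intro e he
        exact Finset.card_eq_one.mp (Finset.mem_filter.mp (Finset.mem_filter.mp he).1).2
      refine Finset.card_bij (fun e he => (hprop e he).choose) ?_ ?_ ?_
      · intro e he
        have hspec := (hprop e he).choose_spec
        obtain ⟨heA, hwe⟩ := Finset.mem_filter.mp he
        obtain ⟨heEc, hcard1⟩ := Finset.mem_filter.mp heA
        have hxmem : (hprop e he).choose ∈ e ∩ N :=
          (Finset.ext_iff.mp hspec _).mpr (Finset.mem_singleton_self _)
        rw [Finset.mem_inter] at hxmem
        exact Finset.mem_filter.mpr ⟨hxmem.2,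
          e, (hEcE e heEc).1, (hEcE e heEc).2, hcard1, hwe, hxmem.1⟩
      · intro e he e' he' heq
        have hspec := (hprop e he).choose_spec
        have hspec' := (hprop e' he').choose_spec
        set x := (hprop e he).choose
        have hx : x ∈ e ∩ N := (Finset.ext_iff.mp hspec x).mpr (Finset.mem_singleton_self _)
        have hx' : x ∈ e' ∩ N := (Finset.ext_iff.mp hspec' x).mpr (Finset.mem_singleton.mpr heq)
        rw [Finset.mem_inter] at hx hx'
        obtain ⟨heA, hwe⟩ := Finset.mem_filter.mp he
        obtain ⟨heA', hwe'⟩ := Finset.mem_filter.mp he'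
        have hxw : x ≠ w := fun h => hwN (h ▸ hx.2)
        exact edge_unique hlin (hEcE e (Finset.mem_filter.mp heA).1).1
          (hEcE e' (Finset.mem_filter.mp heA').1).1 hxw hx.1 hwe hx'.1 hwe'
      · intro c hc
        obtain ⟨hcN, e, heE, hue, hcard1, hwe, hce⟩ := Finset.mem_filter.mp hc
        have heA : e ∈ A.filter (fun e => w ∈ e) :=
          Finset.mem_filter.mpr ⟨Finset.mem_filter.mpr
            ⟨Finset.mem_filter.mpr ⟨heE, hue⟩, hcard1⟩, hwe⟩
        refine ⟨e, heA, ?_⟩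
        have hspec := (hprop e heA).choose_spec
        have : c ∈ ({(hprop e heA).choose} : Finset V) := by
          rw [← hspec]; exact Finset.mem_inter.mpr ⟨hce, hcN⟩
        exact (Finset.mem_singleton.mp this).symm
    -- grouping per w
    have hgw : ∀ w ∈ W,
        2 * (N.filter (fun c => ∃ e ∈ E, u ∉ e ∧ (e ∩ N).card = 1 ∧ w ∈ e ∧ c ∈ e)).card
          ≤ 2*(t-1) + ∑ c ∈ N, (N.filter (fun c' =>
              (c' ≠ c ∧ pickEdge E u c' = pickEdge E u c) ∧
              (∃ e ∈ E, u ∉ e ∧ (e ∩ N).card = 1 ∧ w ∈ e ∧ c ∈ e) ∧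
              (∃ e ∈ E, u ∉ e ∧ (e ∩ N).card = 1 ∧ w ∈ e ∧ c' ∈ e))).card := by
      intro w hw
      set Cw := N.filter (fun c => ∃ e ∈ E, u ∉ e ∧ (e ∩ N).card = 1 ∧ w ∈ e ∧ c ∈ e) with hCwdef
      have hg := grouping_lemma Cw (fun c => pickEdge E u c)
      have himg := rw_bound E t ht hlin hK u w (hwW w hw)
      rw [← hNdef] at himg
      rw [← hCwdef] at himg
      refine le_trans hg (Nat.add_le_add ?_ ?_)
      · exact Nat.mul_le_mul_left 2 himg
      · refine le_trans (Finset.sum_le_sum (fun c hc => ?_))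
          (Finset.sum_le_sum_of_subset (Finset.filter_subset _ _))
        refine Finset.card_le_card fun c' hc' => ?_
        obtain ⟨hc'Cw, hcond⟩ := Finset.mem_filter.mp hc'
        obtain ⟨hc'N, hc'link⟩ := Finset.mem_filter.mp hc'Cw
        exact Finset.mem_filter.mpr ⟨hc'N, hcond, (Finset.mem_filter.mp hc).2, hc'link⟩
    -- put together and swap sums
    have hchain : 2 * (A.card * (k-1))
        ≤ 2*((t-1)*W.card) + ∑ w ∈ W, ∑ c ∈ N, (N.filter (fun c' =>
              (c' ≠ c ∧ pickEdge E u c' = pickEdge E u c) ∧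
              (∃ e ∈ E, u ∉ e ∧ (e ∩ N).card = 1 ∧ w ∈ e ∧ c ∈ e) ∧
              (∃ e ∈ E, u ∉ e ∧ (e ∩ N).card = 1 ∧ w ∈ e ∧ c' ∈ e))).card := by
      rw [hAinc, Finset.mul_sum]
      calc ∑ w ∈ W, 2 * (A.filter (fun e => w ∈ e)).card
          ≤ ∑ w ∈ W, (2*(t-1) + ∑ c ∈ N, (N.filter (fun c' =>
              (c' ≠ c ∧ pickEdge E u c' = pickEdge E u c) ∧
              (∃ e ∈ E, u ∉ e ∧ (e ∩ N).card = 1 ∧ w ∈ e ∧ c ∈ e) ∧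
              (∃ e ∈ E, u ∉ e ∧ (e ∩ N).card = 1 ∧ w ∈ e ∧ c' ∈ e))).card) := by
            refine Finset.sum_le_sum fun w hw => ?_
            rw [hbij w hw]
            exact hgw w hw
        _ = 2*((t-1)*W.card) + _ := by
            rw [Finset.sum_add_distrib, Finset.sum_const, smul_eq_mul]
            ring_nf
    refine le_trans hchain (Nat.add_le_add_left ?_ _)
    -- swap sums: over w then (c,c') → over c, c', w
    rw [Finset.sum_comm]
    have hswap2 : ∀ c ∈ N, ∑ w ∈ W, (N.filter (fun c' =>
              (c' ≠ c ∧ pickEdge E u c' = pickEdge E u c) ∧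
              (∃ e ∈ E, u ∉ e ∧ (e ∩ N).card = 1 ∧ w ∈ e ∧ c ∈ e) ∧
              (∃ e ∈ E, u ∉ e ∧ (e ∩ N).card = 1 ∧ w ∈ e ∧ c' ∈ e))).card
        = ∑ c' ∈ N, (W.filter (fun w =>
              (c' ≠ c ∧ pickEdge E u c' = pickEdge E u c) ∧
              (∃ e ∈ E, u ∉ e ∧ (e ∩ N).card = 1 ∧ w ∈ e ∧ c ∈ e) ∧
              (∃ e ∈ E, u ∉ e ∧ (e ∩ N).card = 1 ∧ w ∈ e ∧ c' ∈ e))).card := by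
      intro c hc
      exact sum_card_filter_comm W N _
    rw [Finset.sum_congr rfl hswap2]
    -- per-pair bound
    have hpair : ∀ c ∈ N, ∀ c' ∈ N, (W.filter (fun w =>
              (c' ≠ c ∧ pickEdge E u c' = pickEdge E u c) ∧
              (∃ e ∈ E, u ∉ e ∧ (e ∩ N).card = 1 ∧ w ∈ e ∧ c ∈ e) ∧
              (∃ e ∈ E, u ∉ e ∧ (e ∩ N).card = 1 ∧ w ∈ e ∧ c' ∈ e))).card
        ≤ if (c' ≠ c ∧ pickEdge E u c' = pickEdge E u c) then (2*k-3)*(s-1) else 0 := by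
      intro c hc c' hc'
      split_ifs with hcond
      · refine le_trans (Finset.card_le_card ?_)
          (pair_bound E k s hk hs hunif hlin hB u c c' hc hc' hcond.1 hcond.2)
        intro w hw
        obtain ⟨hwW2, _, hL⟩ := Finset.mem_filter.mp hw
        exact Finset.mem_filter.mpr ⟨hwW2, hL⟩
      · have hempty : W.filter (fun w =>
              (c' ≠ c ∧ pickEdge E u c' = pickEdge E u c) ∧
              (∃ e ∈ E, u ∉ e ∧ (e ∩ N).card = 1 ∧ w ∈ e ∧ c ∈ e) ∧
              (∃ e ∈ E, u ∉ e ∧ (e ∩ N).card = 1 ∧ w ∈ e ∧ c' ∈ e)) = ∅ := by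
          refine Finset.filter_false_of_mem fun w hw => ?_
          intro hP
          exact hcond hP.1
        rw [hempty, Finset.card_empty]
    calc ∑ c ∈ N, ∑ c' ∈ N, (W.filter _).card
        ≤ ∑ c ∈ N, ∑ c' ∈ N, (if (c' ≠ c ∧ pickEdge E u c' = pickEdge E u c)
            then (2*k-3)*(s-1) else 0) := by
          refine Finset.sum_le_sum fun c hc => Finset.sum_le_sum fun c' hc' => hpair c hc c' hc'
      _ ≤ ∑ _c ∈ N, (k-2) * ((2*k-3)*(s-1)) := by
          refine Finset.sum_le_sum fun c hc => ?_
          rw [← Finset.sum_filter, Finset.sum_const, smul_eq_mul]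
          refine Nat.mul_le_mul_right _ ?_
          -- pairs with the same u-edge: at most k-2
          have hc_ex := (mem_hNbhd.mp hc).2
          obtain ⟨hpE, hup, hcp⟩ := pickEdge_spec hc_ex
          have hsubp : N.filter (fun c' => c' ≠ c ∧ pickEdge E u c' = pickEdge E u c)
              ⊆ ((pickEdge E u c).erase u).erase c := by
            intro c' hcc
            obtain ⟨hc'N, hne, hpeq⟩ := Finset.mem_filter.mp hcc
            have hcp' := (pickEdge_spec (mem_hNbhd.mp hc'N).2).2.2
            rw [hpeq] at hcp'
            exact Finset.mem_erase.mpr ⟨hne,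
              Finset.mem_erase.mpr ⟨(mem_hNbhd.mp hc'N).1, hcp'⟩⟩
          refine le_trans (Finset.card_le_card hsubp) ?_
          rw [Finset.card_erase_of_mem (Finset.mem_erase.mpr ⟨(mem_hNbhd.mp hc).1, hcp⟩),
            Finset.card_erase_of_mem hup, hunif _ hpE]
          omega
      _ = N.card * ((k-2) * ((2*k-3)*(s-1))) := by rw [Finset.sum_const, smul_eq_mul]
  -- |W|
  have hWcard : W.card + (N.card + 1) = Fintype.card V := by
    have h1 := Finset.card_sdiff_add_card_eq_card (Finset.subset_univ (insert u N))
    rw [Finset.card_insert_of_notMem huN] at h1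
    rw [hWdef]
    rw [← Finset.card_univ]
    omega
  -- ==== final real arithmetic ====
  have hkR : (3:ℝ) ≤ (k:ℝ) := by exact_mod_cast hk
  have hsR : (2:ℝ) ≤ (s:ℝ) := by exact_mod_cast hs
  have htR : (1:ℝ) ≤ (t:ℝ) := by exact_mod_cast ht
  have ck1 : ((k-1:ℕ):ℝ) = (k:ℝ)-1 := by
    rw [Nat.cast_sub (by omega : 1 ≤ k)]; norm_num
  have ck2 : ((k-2:ℕ):ℝ) = (k:ℝ)-2 := by
    rw [Nat.cast_sub (by omega : 2 ≤ k)]; norm_num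
  have c2k3 : ((2*k-3:ℕ):ℝ) = 2*(k:ℝ)-3 := by
    rw [Nat.cast_sub (by omega : 3 ≤ 2*k)]; push_cast; ring
  have cs1 : ((s-1:ℕ):ℝ) = (s:ℝ)-1 := by
    rw [Nat.cast_sub (by omega : 1 ≤ s)]; norm_num
  have ct1 : ((t-1:ℕ):ℝ) = (t:ℝ)-1 := by
    rw [Nat.cast_sub (by omega : 1 ≤ t)]; norm_num
  have h1 : ((∑ v ∈ N, hDeg E v : ℕ):ℝ)
      = ((Eu.card * (k-1) + ∑ e ∈ Ec, (e ∩ N).card : ℕ):ℝ) := by rw [hsum]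
  push_cast [ck1] at h1
  have h2 : ((∑ e ∈ Ec, (e ∩ N).card : ℕ):ℝ)
      ≤ ((A.card + ∑ e ∈ Ec, (e ∩ N).card * ((e ∩ N).card - 1) : ℕ):ℝ) := by
    exact_mod_cast hTT
  push_cast at h2
  have h3 : ((∑ e ∈ Ec, (e ∩ N).card * ((e ∩ N).card - 1) : ℕ):ℝ)
      ≤ ((N.card * ((2*k-3)*(s-1)) : ℕ):ℝ) := by exact_mod_cast hPP
  push_cast [c2k3, cs1] at h3
  have h4 : ((2 * (A.card * (k-1)) : ℕ):ℝ)
      ≤ ((2*((t-1)*W.card) + N.card * ((k-2) * ((2*k-3)*(s-1))) : ℕ):ℝ) := by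
    exact_mod_cast hAA
  push_cast [ck1, ck2, c2k3, cs1, ct1] at h4
  have h5 : ((N.card : ℕ):ℝ) = ((Eu.card * (k-1) : ℕ):ℝ) := by rw [hNcard]
  push_cast [ck1] at h5
  have h6 : ((W.card + (N.card + 1) : ℕ):ℝ) = ((Fintype.card V : ℕ):ℝ) := by rw [hWcard]
  push_cast at h6
  have hKpos : (0:ℝ) < (k:ℝ) - 1 := by linarith
  have hK2pos : (0:ℝ) < 2*((k:ℝ)-1) := by linarith
  refine le_of_mul_le_mul_right ?_ hK2pos
  have hd : (hDeg E u : ℝ) = (Eu.card : ℝ) := by rw [hDu]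
  rw [hd]
  have hexp : (((t:ℝ)-1) * (((Fintype.card V):ℝ)-1) / ((k:ℝ)-1)
        + ((6*(k:ℝ)^2-15*(k:ℝ)+10)*((s:ℝ)-1)/2 - ((t:ℝ)-1)) * ((Eu.card:ℝ))) * (2*((k:ℝ)-1))
      = 2*(((t:ℝ)-1)*(((Fintype.card V):ℝ)-1))
        + ((6*(k:ℝ)^2-15*(k:ℝ)+10)*((s:ℝ)-1) - 2*((t:ℝ)-1))*(((k:ℝ)-1)*((Eu.card:ℝ))) := by
    field_simp
  rw [hexp]
  have hcastsum : (∑ v ∈ N, (hDeg E v : ℝ)) = ((∑ v ∈ N, hDeg E v : ℕ):ℝ) := by push_cast; rfl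
  rw [hcastsum]
  push_cast at h1 ⊢
  rw [h1]
  have m2 := mul_le_mul_of_nonneg_left h2 (le_of_lt hK2pos)
  have m3 := mul_le_mul_of_nonneg_left h3 (le_of_lt hK2pos)
  have hTW : ((t:ℝ)-1)*((W.card:ℝ)) = ((t:ℝ)-1)*(((Fintype.card V):ℝ) - ((N.card:ℝ)) - 1) := by
    have hW2 : ((W.card:ℝ)) = ((Fintype.card V):ℝ) - ((N.card:ℝ)) - 1 := by linarith
    rw [hW2]
  have hNQa : ((N.card:ℝ)) * ((2*(k:ℝ)-3)*((s:ℝ)-1))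
      = ((Eu.card:ℝ)) * (((k:ℝ)-1) * ((2*(k:ℝ)-3)*((s:ℝ)-1))) := by rw [h5]; ring
  have hNQb : ((N.card:ℝ)) * (((k:ℝ)-2)*((2*(k:ℝ)-3)*((s:ℝ)-1)))
      = ((Eu.card:ℝ)) * (((k:ℝ)-1) * (((k:ℝ)-2)*((2*(k:ℝ)-3)*((s:ℝ)-1)))) := by rw [h5]; ring
  have hdnn : (0:ℝ) ≤ ((Eu.card:ℝ)) := Nat.cast_nonneg _
  have hnn : (0:ℝ) ≤ ((Eu.card:ℝ)) * (((k:ℝ)-1) * (((k:ℝ)-1) * ((s:ℝ)-2))) := by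
    apply mul_nonneg hdnn
    apply mul_nonneg (by linarith)
    apply mul_nonneg (by linarith) (by linarith)
  have hTN : ((t:ℝ)-1)*((N.card:ℝ)) = ((t:ℝ)-1)*(((k:ℝ)-1)*((Eu.card:ℝ))) := by rw [h5]; ring
  linarith only [m2, m3, h4, hTW, hTN, hNQa, hNQb, hnn]
end
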